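/- arXiv:2203.03202 — 7 statements merged into one kernel-verified Lean document; each statement's English description precedes it below -/
import Mathlib

section
/- Let K be a field, G a finite group, and V a finite-dimensional K-vector space with a representation ρ : G → GL(V) such that V is a simple K[G]-module. Let Q : V → K be a nonzero G-invariant quadratic form. Then either the polarization B of Q is nondegenerate, or char K = 2 and ρ is the trivial representation (ρ(g) = id_V for all g ∈ G), with Q injective and additive. -/
open QuadraticMap

/-- Let `K` be a field, `G` a finite group and `V` a finite-dimensional
`K`-vector space carrying a representation `ρ : G → GL(V)` such that `V` is a simple
`K[G]`-module (i.e. `V ≠ 0` and the only `ρ(G)`-invariant subspaces are `⊥` and `⊤`).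
If `Q : V → K` is a nonzero `G`-invariant quadratic form, then either the polarization
of `Q` is nondegenerate, or `char K = 2`, `ρ` is the trivial representation, and `Q` is
injective and additive. -/
theorem statement0 {K G V : Type*} [Field K] [Group G] [Finite G]
    [AddCommGroup V] [Module K V] [FiniteDimensional K V]
    (ρ : Representation K G V)
    (hnt : Nontrivial V)
    (hsimple : ∀ U : Submodule K V, (∀ g : G, ∀ x ∈ U, ρ g x ∈ U) → U = ⊥ ∨ U = ⊤)
    (Q : QuadraticForm K V) (hQ : Q ≠ 0)
    (hinv : ∀ (g : G) (x : V), Q (ρ g x) = Q x) :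
    (∀ x : V, (∀ y : V, polar (⇑Q) x y = 0) → x = 0) ∨
      (ringChar K = 2 ∧ (∀ g : G, ρ g = LinearMap.id) ∧
        Function.Injective (⇑Q) ∧ ∀ x y : V, Q (x + y) = Q x + Q y) := by
  -- invariance of the polar form
  have hpolar_inv : ∀ (g : G) (x y : V), polar (⇑Q) (ρ g x) (ρ g y) = polar (⇑Q) x y := by
    intro g x y
    simp [polar, ← map_add, hinv]
  -- the radical as a submodule
  let R : Submodule K V :=
    { carrier := {x | ∀ y, polar (⇑Q) x y = 0}
      add_mem' := by
        intro a b ha hb y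
        rw [polar_add_left]
        simp [ha y, hb y]
      zero_mem' := by intro y; simp [polar_zero_left]
      smul_mem' := by
        intro c a ha y
        rw [polar_smul_left]
        simp [ha y] }
  have hRinv : ∀ g : G, ∀ x ∈ R, ρ g x ∈ R := by
    intro g x hx y
    have : polar (⇑Q) (ρ g x) (ρ g ((ρ g⁻¹) y)) = polar (⇑Q) x ((ρ g⁻¹) y) :=
      hpolar_inv g x _
    have h2 : ρ g ((ρ g⁻¹) y) = y := by
      rw [← Module.End.mul_apply, ← map_mul, mul_inv_cancel, map_one, Module.End.one_apply]
    rw [h2] at this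
    rw [this]
    exact hx _
  rcases hsimple R hRinv with hR | hR
  · left
    intro x hx
    have : x ∈ R := hx
    rw [hR] at this
    simpa using this
  · -- degenerate case: polar is identically zero
    right
    have hpol : ∀ x y : V, polar (⇑Q) x y = 0 := by
      intro x y
      have : x ∈ R := by rw [hR]; trivial
      exact this y
    have hadd : ∀ x y : V, Q (x + y) = Q x + Q y := by
      intro x y
      have := hpol x y
      simp only [polar] at this
      linear_combination this
    -- 2 * Q x = 0
    have h2 : ∀ x : V, Q x + Q x = 0 := by
      intro x
      have h4 : Q x + Q x = (2 : K) * (2 : K) * Q x := by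
        rw [← hadd, show x + x = (2 : K) • x from (two_smul K x).symm,
          QuadraticMap.map_smul, smul_eq_mul]
      linear_combination -h4
    -- there is v with Q v ≠ 0
    obtain ⟨v, hv⟩ : ∃ v, Q v ≠ 0 := by
      by_contra h
      push_neg at h
      exact hQ (by ext x; simpa using h x)
    -- char K = 2
    have htwo : (2 : K) = 0 := by
      have h' : (2 : K) * Q v = 0 := by linear_combination h2 v
      rcases mul_eq_zero.mp h' with h | h
      · exact h
      · exact absurd h hv
    have hchar : ringChar K = 2 :=
      CharP.ringChar_of_prime_eq_zero Nat.prime_two (by exact_mod_cast htwo)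
    -- kernel of Q is a submodule
    have hQneg : ∀ x : V, Q (-x) = Q x := fun x => by
      have : (-x) = (-1 : K) • x := by simp
      rw [this, QuadraticMap.map_smul, smul_eq_mul]; ring
    let U : Submodule K V :=
      { carrier := {x | Q x = 0}
        add_mem' := by
          intro a b ha hb
          simp only [Set.mem_setOf_eq] at *
          rw [hadd, ha, hb, add_zero]
        zero_mem' := by simp
        smul_mem' := by
          intro c a ha
          simp only [Set.mem_setOf_eq] at *
          rw [QuadraticMap.map_smul, ha, smul_zero] }
    have hUinv : ∀ g : G, ∀ x ∈ U, ρ g x ∈ U := by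
      intro g x hx
      show Q (ρ g x) = 0
      rw [hinv]; exact hx
    have hU : U = ⊥ := by
      rcases hsimple U hUinv with h | h
      · exact h
      · exfalso
        have : v ∈ U := by rw [h]; trivial
        exact hv this
    have hker : ∀ x : V, Q x = 0 → x = 0 := by
      intro x hx
      have : x ∈ U := hx
      rw [hU] at this
      simpa using this
    refine ⟨hchar, ?_, ?_, hadd⟩
    · -- trivial representation
      intro g
      ext x
      simp only [LinearMap.id_coe, id_eq]
      have : Q (ρ g x - x) = 0 := by
        rw [sub_eq_add_neg, hadd, hQneg, hinv, h2]
      have := hker _ this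
      rwa [sub_eq_zero] at this
    · -- injectivity
      intro x y hxy
      have : Q (x - y) = 0 := by
        rw [sub_eq_add_neg, hadd, hQneg, hxy, h2]
      have := hker _ this
      rwa [sub_eq_zero] at this
end

section
/- Let L be a field with char L ≠ 2 and G a finite group. Let V = V₁ ⊕ V₂ be a direct sum of two G-subrepresentations, where dim_L V₁ is odd, and let Q₁ on V₁ and Q₂ on V₂ be nondegenerate G-invariant quadratic forms. Then for every c ∈ L^× there exists a nondegenerate G-invariant quadratic form Q on V whose determinant det(B(e_i,e_j)) (B the polarization of Q, (e_i) any basis of V) lies in the square class c·(L^×)². In particular, the nondegenerate G-invariant quadratic forms on V realize every square class of L as determinant. -/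
open QuadraticMap Matrix

private lemma det_change_basis {L V : Type*} [Field L] [AddCommGroup V] [Module L V]
    {ι κ : Type*} [Fintype ι] [Fintype κ] [DecidableEq ι] [DecidableEq κ]
    (B : LinearMap.BilinForm L V) (b : Module.Basis ι L V) (e : Module.Basis κ L V) :
    ∃ t : L, t ≠ 0 ∧ (LinearMap.BilinForm.toMatrix e B).det = (LinearMap.BilinForm.toMatrix b B).det * t ^ 2 := by
  let σ : ι ≃ κ := b.indexEquiv e
  let b' : Module.Basis κ L V := b.reindex σ
  have hM : LinearMap.BilinForm.toMatrix b' B = (LinearMap.BilinForm.toMatrix b B).submatrix σ.symm σ.symm := by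
    ext i j
    simp [b', LinearMap.BilinForm.toMatrix_apply, Module.Basis.reindex_apply, Matrix.submatrix_apply]
  have hdet' : (LinearMap.BilinForm.toMatrix b' B).det = (LinearMap.BilinForm.toMatrix b B).det := by
    rw [hM, Matrix.det_submatrix_equiv_self]
  set P := b'.toMatrix e with hP
  have hPdet : P.det ≠ 0 := by
    intro h
    have h2 := congrArg Matrix.det (Module.Basis.toMatrix_mul_toMatrix_flip b' e)
    rw [Matrix.det_mul, h, zero_mul, Matrix.det_one] at h2
    exact zero_ne_one h2
  refine ⟨P.det, hPdet, ?_⟩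
  have hbc := LinearMap.BilinForm.toMatrix_mul_basis_toMatrix b' e B
  calc (LinearMap.BilinForm.toMatrix e B).det = (Pᵀ * LinearMap.BilinForm.toMatrix b' B * P).det := by rw [hbc]
    _ = _ := by rw [Matrix.det_mul, Matrix.det_mul, Matrix.det_transpose, hdet']; ring

/-- Let `L` be a field with `char L ≠ 2`, `G` a finite group, and
`V = V₁ ⊕ V₂` a direct sum of two `G`-subrepresentations with `dim V₁` odd, each carrying
a nondegenerate `G`-invariant quadratic form.  Then every square class `c·(L^×)²` is
realized as the determinant of a nondegenerate `G`-invariant quadratic form on `V`. -/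
theorem statement4 {L G V : Type*} [Field L] [Group G] [Finite G]
    [AddCommGroup V] [Module L V] [FiniteDimensional L V]
    (hchar : ringChar L ≠ 2)
    (ρ : Representation L G V)
    (V₁ V₂ : Submodule L V)
    (hcompl : IsCompl V₁ V₂)
    (h₁ : ∀ g : G, ∀ x ∈ V₁, ρ g x ∈ V₁) (h₂ : ∀ g : G, ∀ x ∈ V₂, ρ g x ∈ V₂)
    (hodd : Odd (Module.finrank L V₁))
    (Q₁ : QuadraticForm L V₁) (Q₂ : QuadraticForm L V₂)
    (hQ₁nd : ∀ x : V₁, (∀ y : V₁, polar (⇑Q₁) x y = 0) → x = 0)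
    (hQ₂nd : ∀ x : V₂, (∀ y : V₂, polar (⇑Q₂) x y = 0) → x = 0)
    (hQ₁inv : ∀ (g : G) (x : V₁), Q₁ ((ρ g).restrict (h₁ g) x) = Q₁ x)
    (hQ₂inv : ∀ (g : G) (x : V₂), Q₂ ((ρ g).restrict (h₂ g) x) = Q₂ x) :
    ∀ c : L, c ≠ 0 → ∃ Q : QuadraticForm L V,
      (∀ x : V, (∀ y : V, polar (⇑Q) x y = 0) → x = 0) ∧
      (∀ (g : G) (x : V), Q (ρ g x) = Q x) ∧
      ∀ (n : ℕ) (e : Module.Basis (Fin n) L V),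
        ∃ u : L, u ≠ 0 ∧ (Matrix.of fun i j => polar (⇑Q) (e i) (e j)).det = c * u ^ 2 := by
  classical
  intro c hc
  set f := Submodule.prodEquivOfIsCompl V₁ V₂ hcompl with hf
  set b₁ := Module.finBasis L V₁ with hb₁
  set b₂ := Module.finBasis L V₂ with hb₂
  set M₁ := LinearMap.BilinForm.toMatrix b₁ Q₁.polarBilin with hM₁
  set M₂ := LinearMap.BilinForm.toMatrix b₂ Q₂.polarBilin with hM₂
  have hs₁ : Q₁.polarBilin.SeparatingLeft := fun x hx => hQ₁nd x fun y => hx y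
  have hs₂ : Q₂.polarBilin.SeparatingLeft := fun x hx => hQ₂nd x fun y => hx y
  have hd₁ : M₁.det ≠ 0 := (LinearMap.separatingLeft_iff_det_ne_zero b₁).mp hs₁
  have hd₂ : M₂.det ≠ 0 := (LinearMap.separatingLeft_iff_det_ne_zero b₂).mp hs₂
  set d := M₁.det * M₂.det with hdd
  have hd : d ≠ 0 := mul_ne_zero hd₁ hd₂
  set a := c * d⁻¹ with ha'
  have ha : a ≠ 0 := mul_ne_zero hc (inv_ne_zero hd)
  set Qp : QuadraticForm L (V₁ × V₂) := (a • Q₁).prod Q₂ with hQp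
  set Q : QuadraticForm L V := Qp.comp (f.symm : V →ₗ[L] V₁ × V₂) with hQ
  have hQapp : ∀ x : V, Q x = a * Q₁ (f.symm x).1 + Q₂ (f.symm x).2 := by
    intro x
    simp [hQ, hQp, QuadraticMap.comp_apply, QuadraticMap.prod_apply, smul_eq_mul]
  have hpolar : ∀ x y : V, polar (⇑Q) x y =
      a * polar (⇑Q₁) (f.symm x).1 (f.symm y).1 + polar (⇑Q₂) (f.symm x).2 (f.symm y).2 := by
    intro x y
    simp only [polar, hQapp, map_add, Prod.fst_add, Prod.snd_add]
    ring
  -- nondegeneracy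
  have hnd : ∀ x : V, (∀ y : V, polar (⇑Q) x y = 0) → x = 0 := by
    intro x hx
    have h1 : (f.symm x).1 = 0 := by
      apply hQ₁nd
      intro y₁
      have := hx (f (y₁, 0))
      rw [hpolar, f.symm_apply_apply] at this
      simp only [polar_zero_right, add_zero] at this
      exact (mul_eq_zero.mp this).resolve_left ha
    have h2 : (f.symm x).2 = 0 := by
      apply hQ₂nd
      intro y₂
      have := hx (f (0, y₂))
      rw [hpolar, f.symm_apply_apply] at this
      simpa [polar_zero_right, h1] using this
    have : f.symm x = 0 := Prod.ext h1 h2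
    have := congrArg f this
    rwa [f.apply_symm_apply, map_zero] at this
  -- invariance
  have hinv : ∀ (g : G) (x : V), Q (ρ g x) = Q x := by
    intro g x
    have hx : x = ((f.symm x).1 : V) + ((f.symm x).2 : V) := by
      conv_lhs => rw [← f.apply_symm_apply x]
      rfl
    have hsymm : f.symm (ρ g x) =
        ((ρ g).restrict (h₁ g) (f.symm x).1, (ρ g).restrict (h₂ g) (f.symm x).2) := by
      rw [LinearEquiv.symm_apply_eq]
      show ρ g x = ((ρ g).restrict (h₁ g) (f.symm x).1 : V) + ((ρ g).restrict (h₂ g) (f.symm x).2 : V)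
      rw [LinearMap.restrict_coe_apply, LinearMap.restrict_coe_apply]
      conv_lhs => rw [hx]
      rw [map_add]
    rw [hQapp, hQapp, hsymm]
    simp only [hQ₁inv, hQ₂inv]
  refine ⟨Q, hnd, hinv, ?_⟩
  -- determinant
  obtain ⟨k, hk⟩ := hodd
  set b : Module.Basis (Fin (Module.finrank L V₁) ⊕ Fin (Module.finrank L V₂)) L V :=
    (b₁.prod b₂).map f with hb
  have key : LinearMap.BilinForm.toMatrix b Q.polarBilin = Matrix.fromBlocks (a • M₁) 0 0 M₂ := by
    ext i j
    have hcoe : ∀ p : V₁ × V₂, f.symm (f p) = p := fun p => f.symm_apply_apply p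
    rcases i with i | i <;> rcases j with j | j <;>
      simp [LinearMap.BilinForm.toMatrix_apply, polarBilin_apply_apply, hpolar, hb, Module.Basis.map_apply,
        hcoe, Module.Basis.prod_apply_inl_fst, Module.Basis.prod_apply_inl_snd, Module.Basis.prod_apply_inr_fst,
        Module.Basis.prod_apply_inr_snd, Matrix.fromBlocks_apply₁₁, Matrix.fromBlocks_apply₁₂,
        Matrix.fromBlocks_apply₂₁, Matrix.fromBlocks_apply₂₂, hM₁, hM₂, polar_zero_left,
        polar_zero_right, Matrix.smul_apply, smul_eq_mul]
  have hdetb : (LinearMap.BilinForm.toMatrix b Q.polarBilin).det = c * (a ^ k) ^ 2 := by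
    rw [key, Matrix.det_fromBlocks_zero₂₁, Matrix.det_smul, Fintype.card_fin]
    have hpow : a ^ Module.finrank L V₁ = a * (a ^ k) ^ 2 := by rw [hk]; ring
    rw [hpow, ha', hdd]
    field_simp
  intro n e
  obtain ⟨t, ht, hte⟩ := det_change_basis Q.polarBilin b e
  refine ⟨a ^ k * t, mul_ne_zero (pow_ne_zero _ ha) ht, ?_⟩
  have hmat : (Matrix.of fun i j => polar (⇑Q) (e i) (e j)) = LinearMap.BilinForm.toMatrix e Q.polarBilin := by
    ext i j
    simp [LinearMap.BilinForm.toMatrix_apply, polarBilin_apply_apply]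
  rw [hmat, hte, hdetb]
  ring
end

section
/- Let K be a field, G a finite group, and S a simple finite-dimensional K[G]-module that is not isomorphic to its dual S^∨ (with the contragredient action). Let V := S ⊕ S^∨ and let Q be a nondegenerate G-invariant quadratic form on V. Then Q vanishes identically on the submodule S ⊕ 0 (which is totally isotropic of half the dimension of V), and if char K ≠ 2 then det(B(e_i,e_j)) ≡ (−1)^{dim S} modulo (K^×)² for any basis (e_i) of V, B the polarization of Q; i.e. the discriminant disc(Q) is the trivial square class. -/
open QuadraticMap

open Matrix

/-- Let `K` be a field, `G` a finite group, `S` a simple finite-dimensional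
`K[G]`-module not isomorphic to its dual `S^∨` (with the contragredient action), and `Q` a
nondegenerate `G`-invariant quadratic form on `V := S ⊕ S^∨`.  Then `Q` vanishes on
`S ⊕ 0`, and if `char K ≠ 2` the Gram determinant of `Q` is `(-1)^{dim S}` modulo squares,
i.e. `disc Q` is the trivial square class. -/
theorem statement7 {K G S : Type*} [Field K] [Group G] [Finite G]
    [AddCommGroup S] [Module K S] [FiniteDimensional K S]
    (ρ : Representation K G S)
    (hnt : Nontrivial S)
    (hsimple : ∀ U : Submodule K S, (∀ g : G, ∀ x ∈ U, ρ g x ∈ U) → U = ⊥ ∨ U = ⊤)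
    -- `S` is not isomorphic to its dual with the contragredient action:
    (hnotdual : ¬ ∃ e : S ≃ₗ[K] Module.Dual K S,
      ∀ (g : G) (x : S), e (ρ g x) = (ρ g⁻¹).dualMap (e x))
    (Q : QuadraticForm K (S × Module.Dual K S))
    (hnd : ∀ x : S × Module.Dual K S,
      (∀ y : S × Module.Dual K S, polar (⇑Q) x y = 0) → x = 0)
    (hinv : ∀ (g : G) (x : S × Module.Dual K S),
      Q (LinearMap.prodMap (ρ g) ((ρ g⁻¹).dualMap) x) = Q x) :
    (∀ s : S, Q (s, 0) = 0) ∧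
    (ringChar K ≠ 2 →
      ∀ (n : ℕ) (e : Module.Basis (Fin n) K (S × Module.Dual K S)),
        ∃ u : K, u ≠ 0 ∧
          (Matrix.of fun i j => polar (⇑Q) (e i) (e j)).det =
            (-1 : K) ^ Module.finrank K S * u ^ 2) := by
  classical
  set V := S × Module.Dual K S with hV
  let T : G → (V →ₗ[K] V) := fun g => LinearMap.prodMap (ρ g) ((ρ g⁻¹).dualMap)
  have hρρ : ∀ (g : G) (t : S), ρ g (ρ g⁻¹ t) = t := by
    intro g t
    have : ρ g * ρ g⁻¹ = 1 := by rw [← _root_.map_mul, mul_inv_cancel, _root_.map_one]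
    calc ρ g (ρ g⁻¹ t) = (ρ g * ρ g⁻¹) t := rfl
    _ = t := by rw [this]; rfl
  have hT1 : ∀ (g : G) (s : S), T g ((s, 0) : V) = ((ρ g s, 0) : V) := by
    intro g s
    show ((ρ g) s, (ρ g⁻¹).dualMap 0) = ((ρ g) s, 0)
    rw [map_zero]
  have hTinv : ∀ (g : G) (x y : V), polar (⇑Q) (T g x) (T g y) = polar (⇑Q) x y := by
    intro g x y
    have hadd : T g x + T g y = T g (x + y) := (map_add (T g) x y).symm
    simp only [polar, hadd, T, hinv g]
  -- Step B : the polar form vanishes on `S ⊕ 0`.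
  have hB : ∀ s t : S, polar (⇑Q) ((s, 0) : V) ((t, 0) : V) = 0 := by
    let inl : S →ₗ[K] V := LinearMap.inl K S (Module.Dual K S)
    let φ : S →ₗ[K] Module.Dual K S := Q.polarBilin.compl₁₂ inl inl
    have hφap : ∀ s t : S, φ s t = polar (⇑Q) ((s, 0) : V) ((t, 0) : V) := by
      intro s t; rfl
    have hφequi : ∀ (g : G) (s : S), φ (ρ g s) = (ρ g⁻¹).dualMap (φ s) := by
      intro g s
      ext t
      have h1 : ((ρ g s, 0) : V) = T g ((s, 0) : V) := (hT1 g s).symm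
      have h2 : ((t, 0) : V) = T g ((ρ g⁻¹ t, 0) : V) := by rw [hT1, hρρ]
      have : φ (ρ g s) t = polar (⇑Q) ((s, 0) : V) ((ρ g⁻¹ t, 0) : V) := by
        rw [hφap, h1, h2, hTinv]
      rw [this, LinearMap.dualMap_apply, hφap]
    have hker : ∀ g : G, ∀ x ∈ LinearMap.ker φ, ρ g x ∈ LinearMap.ker φ := by
      intro g x hx
      rw [LinearMap.mem_ker] at hx ⊢
      rw [hφequi, hx, map_zero]
    rcases hsimple (LinearMap.ker φ) hker with h | h
    · exfalso
      have hinj : Function.Injective φ := LinearMap.ker_eq_bot.mp h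
      have hsurj : Function.Surjective φ :=
        (LinearMap.injective_iff_surjective_of_finrank_eq_finrank
          (Subspace.dual_finrank_eq).symm).mp hinj
      exact hnotdual ⟨LinearEquiv.ofBijective φ ⟨hinj, hsurj⟩, fun g x => hφequi g x⟩
    · intro s t
      rw [← hφap]
      have : s ∈ LinearMap.ker φ := by rw [h]; trivial
      rw [LinearMap.mem_ker] at this
      rw [this]; rfl
  -- Step C : `Q` vanishes on `S ⊕ 0`.
  have hmain : ∀ s : S, Q ((s, 0) : V) = 0 := by
    let W : Submodule K S :=
      { carrier := {s : S | Q ((s, 0) : V) = 0}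
        add_mem' := by
          intro a b ha hb
          simp only [Set.mem_setOf_eq] at ha hb ⊢
          have h1 : ((a + b, 0) : V) = (a, 0) + (b, 0) := by simp
          rw [h1, QuadraticMap.map_add (⇑Q) ((a, 0) : V) ((b, 0) : V), ha, hb, hB]
          simp
        zero_mem' := by
          simp only [Set.mem_setOf_eq]
          exact map_zero Q
        smul_mem' := by
          intro c s hs
          simp only [Set.mem_setOf_eq] at hs ⊢
          have h1 : ((c • s, 0) : V) = c • ((s, 0) : V) := by simp
          rw [h1, QuadraticMap.map_smul, hs]
          simp }
    have hWmem : ∀ s : S, s ∈ W ↔ Q ((s, 0) : V) = 0 := fun s => Iff.rfl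
    have hWinv : ∀ g : G, ∀ x ∈ W, ρ g x ∈ W := by
      intro g x hx
      rw [hWmem] at hx ⊢
      rw [← hT1, hinv, hx]
    rcases hsimple W hWinv with h | h
    · exfalso
      have htriv : ∀ (g : G) (s : S), ρ g s = s := by
        intro g s
        have hq : Q ((ρ g s, 0) : V) = Q ((s, 0) : V) := by rw [← hT1, hinv]
        have hadd : ((ρ g s - s, 0) : V) + ((s, 0) : V) = ((ρ g s, 0) : V) := by simp
        have := QuadraticMap.map_add (⇑Q) ((ρ g s - s, 0) : V) ((s, 0) : V)
        rw [hadd, hB, hq, add_zero] at this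
        have h0 : Q ((ρ g s - s, 0) : V) = 0 := right_eq_add.mp this
        have : ρ g s - s ∈ W := (hWmem _).mpr h0
        rw [h, Submodule.mem_bot] at this
        rw [sub_eq_zero] at this
        exact this
      refine hnotdual ⟨LinearEquiv.ofFinrankEq S (Module.Dual K S)
        (Subspace.dual_finrank_eq).symm, ?_⟩
      intro g x
      rw [htriv]
      exact (LinearMap.ext fun y => by rw [LinearMap.dualMap_apply, htriv]).symm
    · intro s
      have : s ∈ W := by rw [h]; trivial
      exact (hWmem s).mp this
  refine ⟨hmain, fun _ n e => ?_⟩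
  -- Step D : the discriminant computation.
  set d := Module.finrank K S with hd
  let bS : Module.Basis (Fin d) K S := Module.finBasis K S
  let bD : Module.Basis (Fin d) K (Module.Dual K S) :=
    (Module.finBasis K (Module.Dual K S)).reindex (finCongr Subspace.dual_finrank_eq)
  let b0 : Module.Basis (Fin d ⊕ Fin d) K V := bS.prod bD
  have hcard : Fintype.card (Fin d ⊕ Fin d) = n := by
    have h1 : Module.finrank K V = n := by
      rw [Module.finrank_eq_card_basis e, Fintype.card_fin]
    have h2 : Module.finrank K V = d + d := by
      rw [Module.finrank_prod, Subspace.dual_finrank_eq]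
    simp [Fintype.card_sum, ← h1, h2]
  let σ : (Fin d ⊕ Fin d) ≃ Fin n := Fintype.equivFinOfCardEq hcard
  let b : Module.Basis (Fin n) K V := b0.reindex σ
  let B : V →ₗ[K] V →ₗ[K] K := Q.polarBilin
  have hBpolar : ∀ x y : V, B x y = polar (⇑Q) x y := fun x y => rfl
  let Mb0 : Matrix (Fin d ⊕ Fin d) (Fin d ⊕ Fin d) K := LinearMap.toMatrix₂ b0 b0 B
  let Mb : Matrix (Fin n) (Fin n) K := LinearMap.toMatrix₂ b b B
  let Me : Matrix (Fin n) (Fin n) K := LinearMap.toMatrix₂ e e B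
  let P : Matrix (Fin n) (Fin n) K := b.toMatrix e
  have hMb0ap : ∀ i j, Mb0 i j = B (b0 i) (b0 j) := fun i j =>
    LinearMap.toMatrix₂_apply _ _ _ _ _
  have hMbap : ∀ i j, Mb i j = B (b i) (b j) := fun i j =>
    LinearMap.toMatrix₂_apply _ _ _ _ _
  have hMeap : ∀ i j, Me i j = B (e i) (e j) := fun i j =>
    LinearMap.toMatrix₂_apply _ _ _ _ _
  have hMe : (Matrix.of fun i j => polar (⇑Q) (e i) (e j)) = Me := by
    ext i j
    rw [Matrix.of_apply, ← hBpolar]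
    exact (LinearMap.toMatrix₂_apply _ _ _ _ _).symm
  have hchange : Pᵀ * Mb * P = Me :=
    LinearMap.toMatrix₂_mul_basis_toMatrix b b e e B
  -- block structure of `Mb0`
  let C : Matrix (Fin d) (Fin d) K := fun i j => polar (⇑Q) ((bS i, 0) : V) ((0, bD j) : V)
  let D : Matrix (Fin d) (Fin d) K := fun i j => polar (⇑Q) ((0, bD i) : V) ((0, bD j) : V)
  have hbinl : ∀ i : Fin d, b0 (Sum.inl i) = ((bS i, 0) : V) := by
    intro i
    apply Prod.ext
    · exact Module.Basis.prod_apply_inl_fst bS bD i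
    · exact Module.Basis.prod_apply_inl_snd bS bD i
  have hbinr : ∀ i : Fin d, b0 (Sum.inr i) = ((0, bD i) : V) := by
    intro i
    apply Prod.ext
    · exact Module.Basis.prod_apply_inr_fst bS bD i
    · exact Module.Basis.prod_apply_inr_snd bS bD i
  have hMb0 : Mb0 = Matrix.fromBlocks 0 C Cᵀ D := by
    ext i j
    rcases i with i | i <;> rcases j with j | j
    · rw [hMb0ap, Matrix.fromBlocks_apply₁₁, hBpolar, hbinl, hbinl, hB, Matrix.zero_apply]
    · rw [hMb0ap, Matrix.fromBlocks_apply₁₂, hBpolar, hbinl, hbinr]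
    · rw [hMb0ap, Matrix.fromBlocks_apply₂₁, hBpolar, hbinr, hbinl, polar_comm,
        Matrix.transpose_apply]
    · rw [hMb0ap, Matrix.fromBlocks_apply₂₂, hBpolar, hbinr, hbinr]
  have hMbsub : Mb = Mb0.submatrix σ.symm σ.symm := by
    ext i j
    rw [hMbap, Matrix.submatrix_apply, hMb0ap,
      show b i = b0 (σ.symm i) from b0.reindex_apply σ i,
      show b j = b0 (σ.symm j) from b0.reindex_apply σ j]
  -- determinant of the block matrix
  have hJ : (Matrix.fromBlocks (0 : Matrix (Fin d) (Fin d) K) 1 1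
      (0 : Matrix (Fin d) (Fin d) K)).det = (-1 : K) ^ d := by
    have h1 : Matrix.fromBlocks (0 : Matrix (Fin d) (Fin d) K) 1 1
        (0 : Matrix (Fin d) (Fin d) K) * Matrix.fromBlocks 1 1 0 1 =
        Matrix.fromBlocks 0 1 1 1 := by
      rw [Matrix.fromBlocks_multiply]
      simp
    have h2 := congrArg Matrix.det h1
    rw [Matrix.det_mul, Matrix.det_fromBlocks_zero₂₁, Matrix.det_one, mul_one, mul_one] at h2
    haveI : Invertible (1 : Matrix (Fin d) (Fin d) K) := invertibleOne
    rw [h2, Matrix.det_fromBlocks₂₂, Matrix.det_one, one_mul]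
    have h3 : ((0 : Matrix (Fin d) (Fin d) K) - 1 * ⅟ (1 : Matrix (Fin d) (Fin d) K) * 1) =
        -(1 : Matrix (Fin d) (Fin d) K) := by simp
    rw [h3, Matrix.det_neg, Matrix.det_one, mul_one, Fintype.card_fin]
  have hfac : Matrix.fromBlocks (0 : Matrix (Fin d) (Fin d) K) C Cᵀ D =
      Matrix.fromBlocks C 0 D Cᵀ *
        Matrix.fromBlocks (0 : Matrix (Fin d) (Fin d) K) 1 1 0 := by
    rw [Matrix.fromBlocks_multiply]
    simp
  have hdetMb0 : Mb0.det = (-1 : K) ^ d * C.det ^ 2 := by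
    rw [hMb0, hfac, Matrix.det_mul, hJ, Matrix.det_fromBlocks_zero₁₂, Matrix.det_transpose]
    ring
  have hdetMb : Mb.det = (-1 : K) ^ d * C.det ^ 2 := by
    rw [hMbsub, Matrix.det_submatrix_equiv_self, hdetMb0]
  have hdetMe : Me.det = (-1 : K) ^ d * (C.det * P.det) ^ 2 := by
    rw [← hchange, Matrix.det_mul, Matrix.det_mul, Matrix.det_transpose, hdetMb]
    ring
  refine ⟨C.det * P.det, ?_, by rw [hMe, hdetMe]⟩
  -- nonvanishing
  intro hu
  have hMe0 : Me.det = 0 := by rw [hdetMe, hu]; ring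
  obtain ⟨v, hv0, hv⟩ := (Matrix.exists_mulVec_eq_zero_iff).mpr hMe0
  set x : V := ∑ j, v j • e j with hx
  have hBx : ∀ i : Fin n, B (e i) x = 0 := by
    intro i
    have h1 : Me.mulVec v i = 0 := by rw [hv]; rfl
    rw [Matrix.mulVec, dotProduct] at h1
    rw [hx, map_sum]
    rw [← h1]
    apply Finset.sum_congr rfl
    intro j _
    rw [_root_.map_smul, smul_eq_mul, hMeap, mul_comm]
  have hBallx : ∀ y : V, B y x = 0 := by
    have h2 : B.flip x = 0 := by
      apply Module.Basis.ext e
      intro i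
      rw [LinearMap.flip_apply, hBx, LinearMap.zero_apply]
    intro y
    have h4 := congrArg (fun f => f y) h2
    simpa using h4
  have hx0 : x = 0 := by
    apply hnd
    intro y
    have h3 := hBallx y
    rw [hBpolar] at h3
    rw [polar_comm]
    exact h3
  apply hv0
  have h5 := Fintype.linearIndependent_iff.mp e.linearIndependent v (by rw [← hx, hx0])
  funext j
  exact h5 j
end

section
/- Let K be a field, G a finite group, and S a simple finite-dimensional K[G]-module that admits no nonzero G-invariant quadratic form. Let Q be a nondegenerate G-invariant quadratic form on V := S ⊕ S. Then Q vanishes identically on every simple K[G]-submodule of V; in particular S ⊕ 0 is a totally isotropic submodule of half the dimension of V, and if char K ≠ 2 then det(B(e_i,e_j)) ≡ (−1)^{dim S} modulo (K^×)² for any basis (e_i) of V, B the polarization of Q; i.e. the discriminant disc(Q) is the trivial square class. -/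
open QuadraticMap Matrix

private lemma key8_aux {K G S : Type*} [Field K] [Group G]
    [AddCommGroup S] [Module K S]
    (ρ : Representation K G S)
    (hnoq : ∀ q : QuadraticForm K S, (∀ (g : G) (x : S), q (ρ g x) = q x) → q = 0)
    (Q : QuadraticForm K (S × S))
    (hinv : ∀ (g : G) (x : S × S), Q (LinearMap.prodMap (ρ g) (ρ g) x) = Q x)
    (U : Submodule K (S × S))
    (hU : ∀ g : G, ∀ x ∈ U, LinearMap.prodMap (ρ g) (ρ g) x ∈ U)
    (φ : (S × S) →ₗ[K] S)
    (hφ : ∀ (g : G) (x : S × S), φ (LinearMap.prodMap (ρ g) (ρ g) x) = ρ g (φ x))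
    (hinj : ∀ x ∈ U, φ x = 0 → x = 0)
    (hsurj : ∀ s : S, ∃ x ∈ U, φ x = s) :
    ∀ x ∈ U, Q x = 0 := by
  set ψ : U →ₗ[K] S := φ.comp U.subtype with hψdef
  have hψ : ∀ x : U, ψ x = φ (x : S × S) := fun x => rfl
  have hbij : Function.Bijective ψ := by
    constructor
    · intro a b hab
      have h1 : φ ((a : S × S) - b) = 0 := by
        rw [_root_.map_sub, ← hψ, ← hψ, hab, sub_self]
      have h2 : ((a : S × S) - b) ∈ U := U.sub_mem a.2 b.2
      have := hinj _ h2 h1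
      exact Subtype.ext (sub_eq_zero.mp this)
    · intro s
      obtain ⟨x, hx, hfx⟩ := hsurj s
      exact ⟨⟨x, hx⟩, hfx⟩
  let e : U ≃ₗ[K] S := LinearEquiv.ofBijective ψ hbij
  have he : ∀ x : U, e x = φ (x : S × S) := fun x => rfl
  let q : QuadraticForm K S := Q.comp (U.subtype.comp (e.symm : S →ₗ[K] U))
  have hq : ∀ s : S, q s = Q ((e.symm s : S × S)) := fun s => rfl
  have hqinv : ∀ (g : G) (s : S), q (ρ g s) = q s := by
    intro g s
    have hmem : LinearMap.prodMap (ρ g) (ρ g) ((e.symm s : S × S)) ∈ U :=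
      hU g _ (e.symm s).2
    have hkey : e.symm (ρ g s) = ⟨_, hmem⟩ := by
      apply e.injective
      rw [e.apply_symm_apply]
      rw [he]
      show ρ g s = φ (LinearMap.prodMap (ρ g) (ρ g) ((e.symm s : S × S)))
      rw [hφ]
      congr 1
      have : φ ((e.symm s : S × S)) = e (e.symm s) := (he _).symm
      rw [this, e.apply_symm_apply]
    rw [hq, hkey, hq]
    exact hinv g _
  have hq0 := hnoq q hqinv
  intro x hx
  have h1 : e.symm (φ x) = ⟨x, hx⟩ := by
    apply e.injective
    rw [e.apply_symm_apply, he]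
  have : q (φ x) = Q x := by rw [hq, h1]
  rw [← this, hq0]
  rfl

private lemma sign_sumComm8 (d : ℕ) :
    Equiv.Perm.sign (Equiv.sumComm (Fin d) (Fin d)) = (-1) ^ d := by
  have h : Equiv.sumComm (Fin d) (Fin d)
      = (Equiv.boolProdEquivSum (Fin d)).permCongr
        (Equiv.prodCongrLeft (fun _ : Fin d => Equiv.swap false true)) := by
    ext x
    rcases x with i | i <;> rfl
  rw [h, Equiv.Perm.sign_permCongr, Equiv.Perm.sign_prodCongrLeft]
  simp [Equiv.Perm.sign_swap]

/-- Let `K` be a field, `G` a finite group, and `S` a simple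
finite-dimensional `K[G]`-module admitting no nonzero `G`-invariant quadratic form.
Let `Q` be a nondegenerate `G`-invariant quadratic form on `V := S ⊕ S`.  Then `Q`
vanishes on every simple `K[G]`-submodule of `V`; in particular `S ⊕ 0` is totally
isotropic of half the dimension, and if `char K ≠ 2` then the Gram determinant of `Q` is
`(-1)^{dim S}` modulo squares, i.e. `disc Q` is the trivial square class. -/
theorem statement8 {K G S : Type*} [Field K] [Group G] [Finite G]
    [AddCommGroup S] [Module K S] [FiniteDimensional K S]
    (ρ : Representation K G S)
    (hnt : Nontrivial S)
    (hsimple : ∀ U : Submodule K S, (∀ g : G, ∀ x ∈ U, ρ g x ∈ U) → U = ⊥ ∨ U = ⊤)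
    -- `S` admits no nonzero `G`-invariant quadratic form:
    (hnoq : ∀ q : QuadraticForm K S, (∀ (g : G) (x : S), q (ρ g x) = q x) → q = 0)
    (Q : QuadraticForm K (S × S))
    (hnd : ∀ x : S × S, (∀ y : S × S, polar (⇑Q) x y = 0) → x = 0)
    (hinv : ∀ (g : G) (x : S × S), Q (LinearMap.prodMap (ρ g) (ρ g) x) = Q x) :
    -- `Q` vanishes on every simple `K[G]`-submodule of `S ⊕ S`
    (∀ U : Submodule K (S × S),
      (∀ g : G, ∀ x ∈ U, LinearMap.prodMap (ρ g) (ρ g) x ∈ U) →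
      U ≠ ⊥ →
      (∀ U' : Submodule K (S × S), U' ≤ U →
        (∀ g : G, ∀ x ∈ U', LinearMap.prodMap (ρ g) (ρ g) x ∈ U') → U' = ⊥ ∨ U' = U) →
      ∀ x ∈ U, Q x = 0) ∧
    -- in particular `S ⊕ 0` is totally isotropic (of half the dimension of `V`)
    (∀ s : S, Q (s, 0) = 0) ∧
    (ringChar K ≠ 2 →
      ∀ (n : ℕ) (e : Module.Basis (Fin n) K (S × S)),
        ∃ u : K, u ≠ 0 ∧
          (Matrix.of fun i j => polar (⇑Q) (e i) (e j)).det =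
            (-1 : K) ^ Module.finrank K S * u ^ 2) := by
  classical
  have key8 := key8_aux ρ hnoq Q hinv
  -- Part 2 first
  have part2 : ∀ s : S, Q (s, 0) = 0 := by
    intro s
    refine key8 (Submodule.prod ⊤ ⊥) ?_ (LinearMap.fst K S S) ?_ ?_ ?_ (s, 0) ?_
    · intro g x hx
      rw [Submodule.mem_prod] at hx ⊢
      refine ⟨trivial, ?_⟩
      simp only [LinearMap.prodMap_apply, Submodule.mem_bot] at hx ⊢
      rw [hx.2, map_zero]
    · intro g x; simp
    · intro x hx h1
      rw [Submodule.mem_prod, Submodule.mem_bot] at hx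
      exact Prod.ext h1 hx.2
    · intro t; exact ⟨(t, 0), by simp [Submodule.mem_prod], rfl⟩
    · simp [Submodule.mem_prod]
  have part1 : (∀ U : Submodule K (S × S),
      (∀ g : G, ∀ x ∈ U, LinearMap.prodMap (ρ g) (ρ g) x ∈ U) →
      U ≠ ⊥ →
      (∀ U' : Submodule K (S × S), U' ≤ U →
        (∀ g : G, ∀ x ∈ U', LinearMap.prodMap (ρ g) (ρ g) x ∈ U') → U' = ⊥ ∨ U' = U) →
      ∀ x ∈ U, Q x = 0) := by
    intro U hUinv hUne hUsimp
    set N : Submodule K (S × S) := U ⊓ Submodule.prod ⊥ ⊤ with hNdef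
    have hNinv : ∀ g : G, ∀ y ∈ N, LinearMap.prodMap (ρ g) (ρ g) y ∈ N := by
      intro g y hy
      obtain ⟨hy1, hy2⟩ := Submodule.mem_inf.mp hy
      rw [Submodule.mem_prod, Submodule.mem_bot] at hy2
      refine Submodule.mem_inf.mpr ⟨hUinv g y hy1, ?_⟩
      rw [Submodule.mem_prod, Submodule.mem_bot]
      simp only [LinearMap.prodMap_apply]
      exact ⟨by rw [hy2.1, map_zero], trivial⟩
    rcases hUsimp N inf_le_left hNinv with hN | hN
    · -- N = ⊥ : fst is injective on U
      have hinj : ∀ x ∈ U, (LinearMap.fst K S S) x = 0 → x = 0 := by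
        intro x hx h1
        have : x ∈ N := Submodule.mem_inf.mpr ⟨hx, by
          rw [Submodule.mem_prod, Submodule.mem_bot]; exact ⟨h1, trivial⟩⟩
        rw [hN] at this
        exact this
      set W : Submodule K S := U.map (LinearMap.fst K S S) with hWdef
      have hWinv : ∀ g : G, ∀ t ∈ W, ρ g t ∈ W := by
        intro g t ht
        obtain ⟨y, hy, hyt⟩ := ht
        exact ⟨LinearMap.prodMap (ρ g) (ρ g) y, hUinv g y hy, by simp [← hyt]⟩
      rcases hsimple W hWinv with hW | hW
      · exfalso
        apply hUne
        rw [eq_bot_iff]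
        intro y hy
        apply hinj y hy
        have : (LinearMap.fst K S S) y ∈ W := ⟨y, hy, rfl⟩
        rw [hW] at this
        exact this
      · refine key8 U hUinv (LinearMap.fst K S S) (by intro g x; simp) hinj ?_
        intro t
        have : t ∈ W := hW ▸ Submodule.mem_top
        obtain ⟨y, hy, hyt⟩ := this
        exact ⟨y, hy, hyt⟩
    · -- N = U : U ≤ ⊥ × ⊤, use snd
      have hUle : U ≤ Submodule.prod ⊥ ⊤ := hN ▸ inf_le_right
      have hinj : ∀ x ∈ U, (LinearMap.snd K S S) x = 0 → x = 0 := by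
        intro x hx h1
        have h2 := hUle hx
        rw [Submodule.mem_prod, Submodule.mem_bot] at h2
        exact Prod.ext h2.1 h1
      set W : Submodule K S := U.map (LinearMap.snd K S S) with hWdef
      have hWinv : ∀ g : G, ∀ t ∈ W, ρ g t ∈ W := by
        intro g t ht
        obtain ⟨y, hy, hyt⟩ := ht
        exact ⟨LinearMap.prodMap (ρ g) (ρ g) y, hUinv g y hy, by simp [← hyt]⟩
      rcases hsimple W hWinv with hW | hW
      · exfalso
        apply hUne
        rw [eq_bot_iff]
        intro y hy
        apply hinj y hy
        have : (LinearMap.snd K S S) y ∈ W := ⟨y, hy, rfl⟩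
        rw [hW] at this
        exact this
      · refine key8 U hUinv (LinearMap.snd K S S) (by intro g x; simp) hinj ?_
        intro t
        have : t ∈ W := hW ▸ Submodule.mem_top
        obtain ⟨y, hy, hyt⟩ := this
        exact ⟨y, hy, hyt⟩
  refine ⟨part1, part2, ?_⟩
  -- Part 3: discriminant computation
  intro _ n e
  set d := Module.finrank K S with hd
  set B : LinearMap.BilinForm K (S × S) := polarBilin Q with hB
  have hBnd : B.Nondegenerate := ⟨fun x hx => hnd x fun y => hx y,
    fun y hy => hnd y fun x => by rw [polar_comm]; exact hy x⟩
  obtain bS := Module.finBasis K S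
  set f : Module.Basis (Fin d ⊕ Fin d) K (S × S) := bS.prod bS with hf
  set M : Matrix (Fin d ⊕ Fin d) (Fin d ⊕ Fin d) K := LinearMap.BilinForm.toMatrix f B with hM
  have hMapp : ∀ i j, M i j = polar (⇑Q) (f i) (f j) := by
    intro i j; rw [hM, LinearMap.BilinForm.toMatrix_apply]; rfl
  have hfl : ∀ i, f (Sum.inl i) = (bS i, (0 : S)) := by
    intro i
    refine Prod.ext ?_ ?_
    · exact Module.Basis.prod_apply_inl_fst _ _ _
    · exact Module.Basis.prod_apply_inl_snd _ _ _
  have hM11 : ∀ i j, M (Sum.inl i) (Sum.inl j) = 0 := by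
    intro i j
    rw [hMapp, hfl, hfl]
    show Q ((bS i, (0:S)) + (bS j, 0)) - Q (bS i, 0) - Q (bS j, 0) = 0
    rw [Prod.mk_add_mk, add_zero, part2, part2, part2, sub_zero, sub_zero]
  set C : Matrix (Fin d) (Fin d) K := Matrix.of fun i j => M (Sum.inl i) (Sum.inr j) with hC
  set Dm : Matrix (Fin d) (Fin d) K := Matrix.of fun i j => M (Sum.inr i) (Sum.inr j) with hDm
  set Em : Matrix (Fin d) (Fin d) K := Matrix.of fun i j => M (Sum.inr i) (Sum.inl j) with hEm
  have hsub : M.submatrix (Equiv.sumComm (Fin d) (Fin d)) id = Matrix.fromBlocks Em Dm 0 C := by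
    ext i j
    rcases i with i | i <;> rcases j with j | j <;>
      simp [Matrix.submatrix_apply, hM11, hC, hDm, hEm]
  have hECt : Em = Cᵀ := by
    ext i j
    rw [hEm, hC]
    show M (Sum.inr i) (Sum.inl j) = M (Sum.inl j) (Sum.inr i)
    rw [hMapp, hMapp, polar_comm]
  have hdet1 : (M.submatrix (Equiv.sumComm (Fin d) (Fin d)) id).det
      = Equiv.Perm.sign (Equiv.sumComm (Fin d) (Fin d)) * M.det :=
    Matrix.det_permute _ M
  have hdet2 : (Matrix.fromBlocks Em Dm 0 C).det = Em.det * C.det :=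
    Matrix.det_fromBlocks_zero₂₁ _ _ _
  have hsign : (Equiv.Perm.sign (Equiv.sumComm (Fin d) (Fin d)) : ℤ) = (-1) ^ d := by
    rw [sign_sumComm8]; simp
  have hMdet : M.det = (-1 : K) ^ d * C.det ^ 2 := by
    have h3 : ((-1 : K) ^ d) * M.det = C.det * C.det := by
      have := hdet1
      rw [hsub, hdet2, hECt, Matrix.det_transpose] at this
      have h4 : ((Equiv.Perm.sign (Equiv.sumComm (Fin d) (Fin d)) : ℤ) : K) = (-1 : K) ^ d := by
        rw [hsign]; push_cast; ring
      rw [h4] at this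
      exact this.symm
    have h5 : ((-1 : K) ^ d) * ((-1 : K) ^ d) = 1 := by
      rw [← pow_add, ← two_mul, pow_mul]; norm_num
    calc M.det = ((-1 : K) ^ d * (-1 : K) ^ d) * M.det := by rw [h5, one_mul]
    _ = (-1 : K) ^ d * (C.det * C.det) := by rw [mul_assoc, h3]
    _ = (-1 : K) ^ d * C.det ^ 2 := by ring
  have hMdetne : M.det ≠ 0 := by
    rw [hM]
    exact (LinearMap.BilinForm.nondegenerate_iff_det_ne_zero f).mp hBnd
  have hCdetne : C.det ≠ 0 := by
    intro h
    rw [hMdet, h] at hMdetne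
    simp at hMdetne
  -- change of basis
  set σ : (Fin d ⊕ Fin d) ≃ Fin n := Module.Basis.indexEquiv f e with hσ
  set f' : Module.Basis (Fin n) K (S × S) := f.reindex σ with hf'
  have hM' : LinearMap.BilinForm.toMatrix f' B = M.submatrix σ.symm σ.symm := by
    ext i j
    rw [LinearMap.BilinForm.toMatrix_apply, Matrix.submatrix_apply, hM, LinearMap.BilinForm.toMatrix_apply,
      hf', Module.Basis.reindex_apply, Module.Basis.reindex_apply]
  have hdetM' : (LinearMap.BilinForm.toMatrix f' B).det = M.det := by
    rw [hM', Matrix.det_submatrix_equiv_self]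
  set P : Matrix (Fin n) (Fin n) K := LinearMap.toMatrix e f' LinearMap.id with hP
  have hcomp : LinearMap.BilinForm.toMatrix e B = Pᵀ * (LinearMap.BilinForm.toMatrix f' B) * P := by
    have h1 : B.comp LinearMap.id LinearMap.id = B := by
      refine LinearMap.ext fun x => LinearMap.ext fun y => ?_
      simp
    conv_lhs => rw [← h1]
    exact LinearMap.BilinForm.toMatrix_comp f' e B LinearMap.id LinearMap.id
  have hPdet : P.det ≠ 0 := by
    have h1 : (LinearMap.toMatrix f' e LinearMap.id) * P = 1 := by
      rw [hP, ← LinearMap.toMatrix_comp e f' e LinearMap.id LinearMap.id, LinearMap.id_comp,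
        LinearMap.toMatrix_id]
    intro h
    have h2 := congrArg Matrix.det h1
    rw [Matrix.det_mul, h, mul_zero, Matrix.det_one] at h2
    exact (zero_ne_one (α := K)) h2
  refine ⟨P.det * C.det, mul_ne_zero hPdet hCdetne, ?_⟩
  have hGe : (Matrix.of fun i j => polar (⇑Q) (e i) (e j)) = LinearMap.BilinForm.toMatrix e B := by
    ext i j
    rw [LinearMap.BilinForm.toMatrix_apply]
    rfl
  rw [hGe, hcomp, Matrix.det_mul, Matrix.det_mul, Matrix.det_transpose, hdetM', hMdet]
  ring
end

section
/- Let R be a discrete valuation ring with maximal ideal generated by π, residue field F = R/(π), and fraction field K. Let G be a finite group, V a finite-dimensional K-vector space with representation ρ : G → GL(V), and Q a nondegenerate G-invariant quadratic form on V with polarization B. Let M ⊆ V be a ρ(G)-invariant R-lattice with B(M, M) ⊆ R. Assume that either 2 is a unit in R, or the trivial F[G]-module is not a composition factor of the F[G]-module M/πM. Then Q(M) ⊆ R, i.e. the lattice M is even. -/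
open QuadraticMap

/-- Let `R` be a DVR with uniformizer `π`, residue field `F = R/(π)` and
fraction field `K`.  Let `ρ` be a representation of a finite group `G` on a
finite-dimensional `K`-space `V` with a nondegenerate `G`-invariant quadratic form `Q`,
and let `M` be a `ρ(G)`-invariant `R`-lattice with `B(M, M) ⊆ R`.  If `2` is a unit in `R`,
or the trivial `F[G]`-module is not a composition factor of `M/πM`, then `Q(M) ⊆ R`. -/
theorem statement10 {R K G V : Type*}
    [CommRing R] [IsDomain R] [IsDiscreteValuationRing R]
    [Field K] [Algebra R K] [IsFractionRing R K]
    [Group G] [Finite G]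
    [AddCommGroup V] [Module K V] [Module R V] [IsScalarTower R K V]
    [FiniteDimensional K V]
    (π : R) (hπ : Irreducible π)
    (ρ : Representation K G V)
    (Q : QuadraticForm K V)
    (hnd : ∀ x : V, (∀ y : V, polar (⇑Q) x y = 0) → x = 0)
    (hinv : ∀ (g : G) (x : V), Q (ρ g x) = Q x)
    (M : Submodule R V) (hfg : M.FG)
    (hspan : Submodule.span K (M : Set V) = ⊤)
    (hMinv : ∀ g : G, ∀ x ∈ M, ρ g x ∈ M)
    -- `M` is integral: `B(M, M) ⊆ R`
    (hint : ∀ x ∈ M, ∀ y ∈ M, ∃ r : R, algebraMap R K r = polar (⇑Q) x y)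
    -- `2` is a unit in `R`, or the trivial `F[G]`-module is not a composition factor
    -- of `M/πM`:
    (halt : IsUnit (2 : R) ∨
      ¬ ∃ P₁ P₂ : Submodule R V, Ideal.span {π} • M ≤ P₁ ∧ P₁ < P₂ ∧ P₂ ≤ M ∧
        (∀ g : G, ∀ x ∈ P₁, ρ g x ∈ P₁) ∧ (∀ g : G, ∀ x ∈ P₂, ρ g x ∈ P₂) ∧
        (∀ g : G, ∀ x ∈ P₂, ρ g x - x ∈ P₁)) :
    -- `M` is even: `Q(M) ⊆ R`
    ∀ x ∈ M, ∃ r : R, algebraMap R K r = Q x := by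
  classical
  set f := algebraMap R K with hfdef
  have hQadd : ∀ x y : V, Q (x + y) = Q x + Q y + polar (⇑Q) x y := by
    intro x y; simp only [QuadraticMap.polar]; ring
  by_cases h2 : IsUnit (2 : R)
  · -- easy case: 2 is a unit
    intro x hx
    obtain ⟨r, hr⟩ := hint x hx x hx
    obtain ⟨u, hu⟩ := h2
    refine ⟨(↑u⁻¹ : R) * r, ?_⟩
    have h1 : f ↑u⁻¹ * f ↑u = 1 := by rw [← map_mul]; simp
    have h2K : f ↑u = 2 := by rw [hu]; exact map_ofNat _ 2
    have hps : polar (⇑Q) x x = 2 * Q x := by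
      have := QuadraticMap.polar_self Q x
      simp only [two_smul, two_mul] at this ⊢; exact this
    rw [map_mul, hr, hps, ← h2K, ← mul_assoc, h1, one_mul]
  · -- hard case: 2 is not a unit
    have halt' := halt.resolve_left h2
    obtain ⟨c, hc⟩ : ∃ c : R, (2 : R) = π * c := by
      have h2m : (2 : R) ∈ Ideal.span {π} := by
        rw [← hπ.maximalIdeal_eq]
        exact mem_nonunits_iff.mpr h2
      rcases Ideal.mem_span_singleton'.mp h2m with ⟨d, hd⟩
      exact ⟨d, by rw [mul_comm]; exact hd.symm⟩
    have hQsmul : ∀ (r : R) (x : V), Q (r • x) = f r * f r * Q x := by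
      intro r x
      rw [← algebraMap_smul K r x, QuadraticMap.map_smul, smul_eq_mul, hfdef]
    -- the auxiliary submodules
    let P : ℕ → Submodule R V := fun n =>
      { carrier := {x | x ∈ M ∧ ∃ r : R, f r = f (π ^ n) * Q x}
        zero_mem' := ⟨M.zero_mem, 0, by simp⟩
        add_mem' := by
          rintro x y ⟨hxM, rx, hrx⟩ ⟨hyM, ry, hry⟩
          refine ⟨M.add_mem hxM hyM, ?_⟩
          obtain ⟨b, hb⟩ := hint x hxM y hyM
          refine ⟨rx + ry + π ^ n * b, ?_⟩
          rw [map_add, map_add, map_mul, hrx, hry, hb, hQadd]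
          ring
        smul_mem' := by
          rintro c x ⟨hxM, r, hr⟩
          refine ⟨M.smul_mem c hxM, c * c * r, ?_⟩
          rw [map_mul, map_mul, hr, hQsmul]
          ring }
    have hPmem : ∀ (n : ℕ) (x : V), x ∈ P n ↔ (x ∈ M ∧ ∃ r : R, f r = f (π ^ n) * Q x) :=
      fun n x => Iff.rfl
    -- monotonicity in n
    have hmono : ∀ (x : V) (n n' : ℕ), n ≤ n' → (∃ r : R, f r = f (π ^ n) * Q x) →
        ∃ r : R, f r = f (π ^ n') * Q x := by
      rintro x n n' hle ⟨r, hr⟩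
      refine ⟨π ^ (n' - n) * r, ?_⟩
      rw [map_mul, hr, ← mul_assoc, ← map_mul, ← pow_add,
        Nat.sub_add_cancel hle]
    -- a uniform denominator exists
    have hN : ∃ n : ℕ, M ≤ P n := by
      obtain ⟨s, hs⟩ := hfg
      have he : ∀ e ∈ s, ∃ n : ℕ, ∃ r : R, f r = f (π ^ n) * Q e := by
        intro e _
        obtain ⟨⟨a, t⟩, hmk⟩ := IsLocalization.mk'_surjective (nonZeroDivisors R) (Q e)
        obtain ⟨n, u, hnu⟩ := IsDiscreteValuationRing.associated_pow_irreducible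
          (nonZeroDivisors.ne_zero t.2) hπ
        refine ⟨n, ↑u * a, ?_⟩
        have hspec : Q e * f ↑t = f a := by
          rw [← hmk]; exact IsLocalization.mk'_spec K a t
        rw [map_mul, ← hnu, map_mul, ← hspec]
        ring
      have hfin : ∀ (t : Finset V), (∀ e ∈ t, ∃ n : ℕ, ∃ r : R, f r = f (π ^ n) * Q e) →
          ∃ n : ℕ, ∀ e ∈ t, ∃ r : R, f r = f (π ^ n) * Q e := by
        intro t
        induction t using Finset.induction_on with
        | empty => exact fun _ => ⟨0, by simp⟩
        | @insert a t hnotmem ih =>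
          intro h
          obtain ⟨n₁, hn₁⟩ := ih fun e he => h e (Finset.mem_insert_of_mem he)
          obtain ⟨n₂, hn₂⟩ := h _ (Finset.mem_insert_self _ _)
          refine ⟨max n₁ n₂, ?_⟩
          intro e he
          rcases Finset.mem_insert.mp he with rfl | he'
          · exact hmono _ _ _ (le_max_right _ _) hn₂
          · exact hmono _ _ _ (le_max_left _ _) (hn₁ e he')
      obtain ⟨n, hn⟩ := hfin s he
      refine ⟨n, ?_⟩
      rw [← hs, Submodule.span_le]
      intro e hes
      exact (hPmem n e).mpr ⟨hs ▸ Submodule.subset_span hes, hn e hes⟩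
    -- the minimal denominator exponent
    set n₀ := Nat.find hN with hn₀def
    have hn₀ : M ≤ P n₀ := Nat.find_spec hN
    rcases Nat.eq_zero_or_pos n₀ with h0 | hpos
    · intro x hx
      obtain ⟨-, r, hr⟩ := hn₀ hx
      refine ⟨r, ?_⟩
      rw [hr, h0]
      simp
    · exfalso
      set m := n₀ - 1 with hmdef
      have hn₀eq : n₀ = m + 1 := (Nat.succ_pred_eq_of_pos hpos).symm
      have hmlt : m < n₀ := by omega
      have hnot : ¬ M ≤ P m := Nat.find_min hN hmlt
      obtain ⟨x₀, hx₀M, hx₀⟩ := SetLike.not_le_iff_exists.mp hnot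
      apply halt'
      refine ⟨P m, M, ?_, ?_, le_refl M, ?_, hMinv, ?_⟩
      · -- π M ≤ P m
        refine Submodule.smul_le.2 fun r hr x hx => ?_
        rcases Ideal.mem_span_singleton'.mp hr with ⟨d, hd⟩
        subst hd
        refine ⟨M.smul_mem _ hx, ?_⟩
        obtain ⟨-, t, ht⟩ := hn₀ hx
        rw [hn₀eq, pow_succ, map_mul] at ht
        refine ⟨d * d * π * t, ?_⟩
        rw [hQsmul]
        simp only [map_mul]
        linear_combination (f d * f d * f π) * ht
      · -- P m < M
        refine lt_of_le_of_ne (fun x hx => hx.1) fun h => hx₀ ?_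
        rw [h]
        exact hx₀M
      · -- G-invariance of P m
        rintro g x ⟨hxM, r, hr⟩
        exact ⟨hMinv g x hxM, r, by rw [hinv g x]; exact hr⟩
      · -- ρ g x - x ∈ P m for x ∈ M
        intro g x hx
        refine ⟨M.sub_mem (hMinv g x hx) hx, ?_⟩
        obtain ⟨-, t, ht⟩ := hn₀ hx
        rw [hn₀eq, pow_succ, map_mul] at ht
        obtain ⟨b, hb⟩ := hint (ρ g x) (hMinv g x hx) x hx
        have hQsub : Q (ρ g x - x) = 2 * Q x - polar (⇑Q) (ρ g x) x := by
          rw [sub_eq_add_neg, hQadd, QuadraticMap.map_neg, QuadraticMap.polar_neg_right,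
            hinv g x]
          ring
        have h2K : f π * f c = 2 := by rw [← map_mul, ← hc]; exact map_ofNat _ 2
        refine ⟨c * t - π ^ m * b, ?_⟩
        rw [_root_.map_sub, map_mul, map_mul, ht, hb, hQsub]
        linear_combination (f (π ^ m) * Q x) * h2K
end

section
/- Let R be a discrete valuation ring with maximal ideal generated by π, residue field F = R/(π), and fraction field K. Let G be a finite group, V a finite-dimensional K-vector space with representation ρ : G → GL(V), and Q a nondegenerate G-invariant quadratic form on V with polarization B. Assume that either 2 is a unit in R, or for every ρ(G)-invariant R-lattice N in V the trivial F[G]-module is not a composition factor of N/πN. Let M be maximal (with respect to inclusion) among ρ(G)-invariant even R-lattices in V, with dual lattice M# = {x ∈ V : B(x, M) ⊆ R}. Then π·M# ⊆ M ⊆ M#, one has π·Q(M#) ⊆ R, and the induced F-valued maps q₁ on M/(π·M#) given by q₁(x + π·M#) := Q(x) mod (π) and q₂ on M#/M given by q₂(x + M) := π·Q(x) mod (π) are well-defined nondegenerate G-invariant quadratic forms on these F[G]-modules. -/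
open QuadraticMap

/-- The dual lattice set `M^# = {x ∈ V : B(x, M) ⊆ R}` of `M` with respect to the
polarization of `Q`. -/
def dualLatticeSet {R K V : Type*} [CommRing R] [Field K] [Algebra R K]
    [AddCommGroup V] [Module K V] [Module R V] [IsScalarTower R K V]
    (Q : QuadraticForm K V) (M : Submodule R V) : Set V :=
  {x : V | ∀ m ∈ M, ∃ r : R, algebraMap R K r = polar (⇑Q) x m}

namespace Statement11Aux

variable {R K : Type*} [CommRing R] [Field K] [Algebra R K]

theorem int_add {a b : K} (ha : ∃ r : R, algebraMap R K r = a)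
    (hb : ∃ r : R, algebraMap R K r = b) : ∃ r : R, algebraMap R K r = a + b := by
  obtain ⟨r, rfl⟩ := ha; obtain ⟨s, rfl⟩ := hb; exact ⟨r + s, map_add _ _ _⟩

theorem int_sub {a b : K} (ha : ∃ r : R, algebraMap R K r = a)
    (hb : ∃ r : R, algebraMap R K r = b) : ∃ r : R, algebraMap R K r = a - b := by
  obtain ⟨r, rfl⟩ := ha; obtain ⟨s, rfl⟩ := hb; exact ⟨r - s, map_sub _ _ _⟩

theorem int_mulA (c : R) {a : K} (ha : ∃ r : R, algebraMap R K r = a) :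
    ∃ r : R, algebraMap R K r = algebraMap R K c * a := by
  obtain ⟨r, rfl⟩ := ha; exact ⟨c * r, map_mul _ _ _⟩

theorem fg_of_le {R M : Type*} [Ring R] [IsNoetherianRing R] [AddCommGroup M] [Module R M]
    {N P : Submodule R M} (h : N ≤ P) (hP : P.FG) : N.FG := by
  haveI := isNoetherian_of_fg_of_noetherian P hP
  have h1 : (N.comap P.subtype).FG := IsNoetherian.noetherian _
  have h2 := h1.map P.subtype
  rwa [Submodule.map_comap_subtype, inf_eq_right.mpr h] at h2

end Statement11Aux

theorem statement11_test : True := trivial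

/-- Let `R` be a DVR with uniformizer `π`, residue field `F = R/(π)` and
fraction field `K`; let `ρ` be a representation of a finite group `G` on a
finite-dimensional `K`-space `V` with nondegenerate invariant quadratic form `Q`.  Assume
`2` is a unit in `R` or no invariant lattice has the trivial module as a composition factor
of its reduction.  If `M` is a maximal invariant even lattice with dual lattice `M^#`, then
`π·M^# ⊆ M ⊆ M^#`, `π·Q(M^#) ⊆ R`, and the induced `F`-valued forms `q₁` on `M/πM^#`
(given by `Q mod π`) and `q₂` on `M^#/M` (given by `π·Q mod π`) are well-defined,
nondegenerate and `G`-invariant. -/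
theorem statement11 {R K G V : Type*}
    [CommRing R] [IsDomain R] [IsDiscreteValuationRing R]
    [Field K] [Algebra R K] [IsFractionRing R K]
    [Group G] [Finite G]
    [AddCommGroup V] [Module K V] [Module R V] [IsScalarTower R K V]
    [FiniteDimensional K V]
    (π : R) (hπ : Irreducible π)
    (ρ : Representation K G V)
    (Q : QuadraticForm K V)
    (hnd : ∀ x : V, (∀ y : V, polar (⇑Q) x y = 0) → x = 0)
    (hinv : ∀ (g : G) (x : V), Q (ρ g x) = Q x)
    -- `2` is a unit in `R`, or for every invariant lattice `N` the trivial `F[G]`-module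
    -- is not a composition factor of `N/πN`:
    (halt : IsUnit (2 : R) ∨
      ∀ N : Submodule R V, N.FG → Submodule.span K (N : Set V) = ⊤ →
        (∀ g : G, ∀ x ∈ N, ρ g x ∈ N) →
        ¬ ∃ P₁ P₂ : Submodule R V, Ideal.span {π} • N ≤ P₁ ∧ P₁ < P₂ ∧ P₂ ≤ N ∧
          (∀ g : G, ∀ x ∈ P₁, ρ g x ∈ P₁) ∧ (∀ g : G, ∀ x ∈ P₂, ρ g x ∈ P₂) ∧
          (∀ g : G, ∀ x ∈ P₂, ρ g x - x ∈ P₁))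
    (M : Submodule R V) (hfg : M.FG)
    (hspan : Submodule.span K (M : Set V) = ⊤)
    (hMinv : ∀ g : G, ∀ x ∈ M, ρ g x ∈ M)
    -- `M` is even: `Q(M) ⊆ R`
    (heven : ∀ x ∈ M, ∃ r : R, algebraMap R K r = Q x)
    -- `M` is maximal among invariant even lattices:
    (hmax : ∀ M' : Submodule R V, M'.FG → Submodule.span K (M' : Set V) = ⊤ →
      (∀ g : G, ∀ x ∈ M', ρ g x ∈ M') → (∀ x ∈ M', ∃ r : R, algebraMap R K r = Q x) →
      M ≤ M' → M' = M) :
    -- `M ⊆ M^#`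
    ((M : Set V) ⊆ dualLatticeSet Q M) ∧
    -- `π · M^# ⊆ M`
    (∀ x ∈ dualLatticeSet Q M, π • x ∈ M) ∧
    -- `π · Q(M^#) ⊆ R`
    (∀ x ∈ dualLatticeSet Q M, ∃ r : R, algebraMap R K r = algebraMap R K π * Q x) ∧
    -- `M^#` is `ρ(G)`-invariant (so that `G` acts on `M/πM^#` and `M^#/M`)
    (∀ g : G, ∀ x ∈ dualLatticeSet Q M, ρ g x ∈ dualLatticeSet Q M) ∧
    -- `q₁` on `M/(π·M^#)`, `q₁(x̄) = Q(x) mod π`, is well-defined: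
    (∀ x ∈ M, ∀ y ∈ M, (∃ z ∈ dualLatticeSet Q M, x - y = π • z) →
      ∃ r : R, algebraMap R K (π * r) = Q x - Q y) ∧
    -- `q₁` is nondegenerate:
    (∀ x ∈ M, (∀ y ∈ M, ∃ r : R, algebraMap R K (π * r) = polar (⇑Q) x y) →
      ∃ z ∈ dualLatticeSet Q M, x = π • z) ∧
    -- `q₂` on `M^#/M`, `q₂(x̄) = π·Q(x) mod π`, is well-defined:
    (∀ x ∈ dualLatticeSet Q M, ∀ y ∈ dualLatticeSet Q M, x - y ∈ M →
      ∃ r : R, algebraMap R K (π * r) =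
        algebraMap R K π * Q x - algebraMap R K π * Q y) ∧
    -- `q₂` is nondegenerate:
    (∀ x ∈ dualLatticeSet Q M,
      (∀ y ∈ dualLatticeSet Q M,
        ∃ r : R, algebraMap R K (π * r) = algebraMap R K π * polar (⇑Q) x y) →
      x ∈ M) := by
  classical
  have inj : Function.Injective (algebraMap R K) := IsFractionRing.injective R K
  have hp0 : algebraMap R K π ≠ 0 := fun h => hπ.ne_zero (inj (by rw [h, map_zero]))
  -- R-smul versus K-smul
  have hsm : ∀ (r : R) (v : V), r • v = algebraMap R K r • v :=
    fun r v => (IsScalarTower.algebraMap_smul K r v).symm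
  have hpsl : ∀ (r : R) (x y : V),
      polar (⇑Q) (r • x) y = algebraMap R K r * polar (⇑Q) x y := by
    intro r x y; rw [hsm r x, polar_smul_left, smul_eq_mul]
  have hpsr : ∀ (r : R) (x y : V),
      polar (⇑Q) x (r • y) = algebraMap R K r * polar (⇑Q) x y := by
    intro r x y; rw [hsm r y, polar_smul_right, smul_eq_mul]
  have hQadd : ∀ x y : V, Q (x + y) = Q x + Q y + polar (⇑Q) x y := by
    intro x y; simp only [polar]; ring
  have hpinv : ∀ (g : G) (x y : V), polar (⇑Q) (ρ g x) (ρ g y) = polar (⇑Q) x y := by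
    intro g x y; simp only [polar, ← map_add, hinv]
  have hρc : ∀ (g : G) (v : V), ρ g (ρ g⁻¹ v) = v := by
    intro g v
    have h1 : ρ g * ρ g⁻¹ = 1 := by rw [← map_mul, mul_inv_cancel, map_one]
    calc ρ g (ρ g⁻¹ v) = (ρ g * ρ g⁻¹) v := rfl
      _ = v := by rw [h1]; rfl
  have hpshift : ∀ (g : G) (x y : V), polar (⇑Q) (ρ g x) y = polar (⇑Q) x (ρ g⁻¹ y) := by
    intro g x y
    conv_lhs => rw [← hρc g y]
    exact hpinv g x (ρ g⁻¹ y)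
  -- M is integral
  have hMint : ∀ x ∈ M, ∀ y ∈ M, ∃ r : R, algebraMap R K r = polar (⇑Q) x y := by
    intro x hx y hy
    have h0 : polar (⇑Q) x y = Q (x + y) - Q x - Q y := rfl
    rw [h0]
    exact Statement11Aux.int_sub (Statement11Aux.int_sub (heven _ (M.add_mem hx hy))
      (heven x hx)) (heven y hy)
  have part1 : (M : Set V) ⊆ dualLatticeSet Q M := fun x hx m hm => hMint x hx m hm
  -- the dual lattice as a submodule
  let Msharp : Submodule R V :=
    { carrier := dualLatticeSet Q M
      add_mem' := by
        intro a b ha hb m hm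
        rw [polar_add_left]
        exact Statement11Aux.int_add (ha m hm) (hb m hm)
      zero_mem' := by
        intro m hm
        rw [polar_zero_left]
        exact ⟨0, map_zero _⟩
      smul_mem' := by
        intro r a ha m hm
        rw [hpsl]
        exact Statement11Aux.int_mulA r (ha m hm) }
  have memMs : ∀ x : V, x ∈ Msharp ↔ x ∈ dualLatticeSet Q M := fun _ => Iff.rfl
  have hMle : M ≤ Msharp := fun x hx => part1 hx
  have part4 : ∀ g : G, ∀ x ∈ dualLatticeSet Q M, ρ g x ∈ dualLatticeSet Q M := by
    intro g x hx m hm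
    rw [hpshift]
    exact hx _ (hMinv g⁻¹ m hm)
  -- clearing denominators
  have hclear : ∀ c : K, ∃ (n : ℕ) (r : R),
      algebraMap R K r = algebraMap R K (π ^ n) * c := by
    intro c
    obtain ⟨a, b, hb, hab⟩ := IsFractionRing.div_surjective (A := R) c
    have hb0 : b ≠ 0 := nonZeroDivisors.ne_zero hb
    obtain ⟨n, u, rfl⟩ := IsDiscreteValuationRing.eq_unit_mul_pow_irreducible hb0 hπ
    have hu0 : algebraMap R K (u : R) ≠ 0 := fun h => by
      have : (u : R) = 0 := inj (by rw [h, map_zero])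
      exact u.ne_zero this
    have hbK : algebraMap R K ((u : R) * π ^ n) ≠ 0 := fun h => by
      have : ((u : R) * π ^ n) = 0 := inj (by rw [h, map_zero])
      exact (mul_ne_zero u.ne_zero (pow_ne_zero n hπ.ne_zero)) this
    have hAa : algebraMap R K a = c * algebraMap R K ((u : R) * π ^ n) :=
      (div_eq_iff hbK).mp hab
    refine ⟨n, ↑u⁻¹ * a, mul_right_cancel₀ hu0 ?_⟩
    have e1 : ((u⁻¹ : Rˣ) : R) * a * (u : R) = a := by
      rw [mul_right_comm, Units.inv_mul, one_mul]
    calc algebraMap R K (↑u⁻¹ * a) * algebraMap R K (u : R)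
        = algebraMap R K a := by rw [← map_mul, e1]
      _ = c * algebraMap R K ((u : R) * π ^ n) := hAa
      _ = algebraMap R K (π ^ n) * c * algebraMap R K (u : R) := by
          rw [map_mul]; ring
  -- Key lemma: an invariant integral lattice (w.r.t. the scaled form c·Q) is even
  have lemA : ∀ (c : K) (N : Submodule R V), N.FG → Submodule.span K (N : Set V) = ⊤ →
      (∀ g : G, ∀ x ∈ N, ρ g x ∈ N) →
      (∀ x ∈ N, ∀ y ∈ N, ∃ r : R, algebraMap R K r = c * polar (⇑Q) x y) →
      ∀ x ∈ N, ∃ r : R, algebraMap R K r = c * Q x := by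
    intro c N hNfg hNspan hNinv hNint
    rcases halt with h2 | hcf
    · -- 2 is a unit
      intro x hx
      obtain ⟨r, hr⟩ := hNint x hx x hx
      obtain ⟨u, hu⟩ := h2
      have hu0 : algebraMap R K (u : R) ≠ 0 := fun h => by
        have : (u : R) = 0 := inj (by rw [h, map_zero])
        exact u.ne_zero this
      refine ⟨↑u⁻¹ * r, mul_left_cancel₀ hu0 ?_⟩
      have e1 : algebraMap R K (u : R) * algebraMap R K (↑u⁻¹ * r) = algebraMap R K r := by
        rw [← map_mul, ← mul_assoc, Units.mul_inv, one_mul]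
      rw [e1, hr, polar_self, hu]
      have e2 : algebraMap R K (2 : R) = (2 : K) := map_ofNat _ 2
      rw [e2, nsmul_eq_mul]
      push_cast
      ring
    · -- no trivial composition factors
      -- the family of submodules where π^j · c · Q is integral
      let P : ℕ → Submodule R V := fun j =>
        { carrier := {x | x ∈ N ∧ ∃ r : R,
            algebraMap R K r = algebraMap R K (π ^ j) * (c * Q x)}
          add_mem' := by
            rintro a b ⟨haN, ha⟩ ⟨hbN, hb⟩
            refine ⟨N.add_mem haN hbN, ?_⟩
            obtain ⟨r3, hr3⟩ := hNint a haN b hbN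
            have e : algebraMap R K (π ^ j) * (c * Q (a + b)) =
                algebraMap R K (π ^ j) * (c * Q a) + algebraMap R K (π ^ j) * (c * Q b) +
                  algebraMap R K (π ^ j) * (c * polar (⇑Q) a b) := by
              rw [hQadd]; ring
            rw [e]
            refine Statement11Aux.int_add (Statement11Aux.int_add ha hb) ?_
            rw [← hr3]
            exact Statement11Aux.int_mulA _ ⟨r3, rfl⟩
          zero_mem' := by
            refine ⟨N.zero_mem, 0, ?_⟩
            rw [QuadraticMap.map_zero]
            simp
          smul_mem' := by
            rintro r a ⟨haN, s, hs⟩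
            refine ⟨N.smul_mem r haN, r * r * s, ?_⟩
            have e : Q (r • a) = algebraMap R K r * algebraMap R K r * Q a := by
              rw [hsm, QuadraticMap.map_smul, smul_eq_mul]
            rw [map_mul, map_mul, hs, e]
            ring }
      have hPmem : ∀ (j : ℕ) (x : V), x ∈ P j ↔ x ∈ N ∧ ∃ r : R,
          algebraMap R K r = algebraMap R K (π ^ j) * (c * Q x) := fun _ _ => Iff.rfl
      have hmono : ∀ (j j' : ℕ) (y : V), j ≤ j' →
          (∃ r : R, algebraMap R K r = algebraMap R K (π ^ j) * (c * Q y)) →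
          ∃ r : R, algebraMap R K r = algebraMap R K (π ^ j') * (c * Q y) := by
        rintro j j' y hle ⟨r, hr⟩
        obtain ⟨k, rfl⟩ := Nat.exists_eq_add_of_le hle
        refine ⟨π ^ k * r, ?_⟩
        rw [map_mul, hr, pow_add, map_mul]
        ring
      have hNfg2 := hNfg
      obtain ⟨sN, hsN⟩ := hNfg2
      have hJ : ∀ y : V, ∃ (j : ℕ) (r : R),
          algebraMap R K r = algebraMap R K (π ^ j) * (c * Q y) := fun y => hclear _
      choose Jf rJ hrJ using hJ
      have hNsub : ∀ x ∈ N, x ∈ P (sN.sup Jf) := by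
        have hle : N ≤ P (sN.sup Jf) := by
          conv_lhs => rw [← hsN]
          apply Submodule.span_le.mpr
          intro y hy
          refine ⟨by rw [← hsN]; exact Submodule.subset_span hy, ?_⟩
          exact hmono _ _ _ (Finset.le_sup hy) ⟨rJ y, hrJ y⟩
        exact fun x hx => hle hx
      have step : ∀ j : ℕ, (∀ x ∈ N, x ∈ P (j + 1)) → ∀ x ∈ N, x ∈ P j := by
        intro j hj1
        by_contra hcon
        push_neg at hcon
        obtain ⟨x0, hx0N, hx0⟩ := hcon
        apply hcf N hNfg hNspan hNinv
        refine ⟨P j, N, ?_, ?_, le_rfl, ?_, hNinv, ?_⟩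
        · refine Submodule.smul_le.mpr ?_
          intro r hr n hn
          obtain ⟨a, rfl⟩ := Ideal.mem_span_singleton'.mp hr
          refine ⟨N.smul_mem _ hn, ?_⟩
          obtain ⟨s, hs⟩ := (hj1 n hn).2
          refine ⟨a * a * π * s, ?_⟩
          have hQs : Q ((a * π) • n) =
              algebraMap R K (a * π) * algebraMap R K (a * π) * Q n := by
            rw [hsm, QuadraticMap.map_smul, smul_eq_mul]
          rw [map_mul, map_mul, map_mul, hs, hQs, pow_succ, map_mul, map_mul]
          ring
        · refine lt_of_le_of_ne (fun x hx => hx.1) ?_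
          intro he
          exact hx0 (he ▸ hx0N)
        · rintro g x ⟨hxN, r, hr⟩
          exact ⟨hNinv g x hxN, r, by rw [hr, hinv]⟩
        · intro g x hxN
          refine ⟨N.sub_mem (hNinv g x hxN) hxN, ?_⟩
          obtain ⟨r1, hr1⟩ := hNint x hxN x hxN
          obtain ⟨r2, hr2⟩ := hNint (ρ g x) (hNinv g x hxN) x hxN
          refine ⟨π ^ j * (r1 - r2), ?_⟩
          have e : Q (ρ g x - x) = polar (⇑Q) x x - polar (⇑Q) (ρ g x) x := by
            rw [sub_eq_add_neg, hQadd, QuadraticMap.map_neg, polar_neg_right, hinv,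
              polar_self, two_nsmul]
            ring
          rw [map_mul, _root_.map_sub, hr1, hr2, e]
          ring
      have hdown : ∀ j : ℕ, (∀ x ∈ N, x ∈ P j) → ∀ x ∈ N, x ∈ P 0 := by
        intro j
        induction j with
        | zero => exact id
        | succ n ih => exact fun h => ih (step n h)
      intro x hx
      obtain ⟨-, r, hr⟩ := hdown _ hNsub x hx
      exact ⟨r, by rw [hr, pow_zero, map_one, one_mul]⟩
  -- the dual lattice is finitely generated
  have hsharp_fg : Msharp.FG := by
    have hMfg2 := hfg
    obtain ⟨sM, hsM⟩ := hMfg2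
    have hsMK : Submodule.span K (↑sM : Set V) = ⊤ := by
      apply top_unique
      rw [← hspan]
      apply Submodule.span_le.mpr
      intro x hx
      have hx2 : x ∈ Submodule.span R (↑sM : Set V) := by rw [hsM]; exact hx
      exact Submodule.span_subset_span R K _ hx2
    obtain ⟨bs, hbs_sub, hbs_span, hbs_li⟩ := exists_linearIndependent K (↑sM : Set V)
    rw [hsMK] at hbs_span
    have hbfin : bs.Finite := sM.finite_toSet.subset hbs_sub
    haveI := hbfin.fintype
    let e : Module.Basis bs K V := Module.Basis.mk hbs_li (by rw [Subtype.range_coe, hbs_span])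
    have heM : ∀ i : bs, (e i : V) ∈ M := by
      intro i
      rw [Module.Basis.mk_apply]
      rw [← hsM]
      exact Submodule.subset_span (hbs_sub i.2)
    let Φ : V →ₗ[K] Module.Dual K V := polarBilin Q
    have hΦapp : ∀ x y : V, Φ x y = polar (⇑Q) x y := fun x y => rfl
    have hΦinj : Function.Injective Φ := by
      have hker : LinearMap.ker Φ = ⊥ := by
        ext x
        simp only [LinearMap.mem_ker, Submodule.mem_bot]
        constructor
        · intro hx
          apply hnd
          intro y
          rw [← hΦapp, hx]
          rfl
        · rintro rfl
          exact map_zero Φ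
      exact LinearMap.ker_eq_bot.mp hker
    have hΦsurj : Function.Surjective Φ :=
      (LinearMap.injective_iff_surjective_of_finrank_eq_finrank
        (Subspace.dual_finrank_eq).symm).mp hΦinj
    choose f hf using fun i : bs => hΦsurj (e.coord i)
    have key : ∀ x ∈ Msharp, x ∈ Submodule.span R (Set.range f) := by
      intro x hx
      have hco : ∀ i : bs, ∃ r : R, algebraMap R K r = polar (⇑Q) x (e i) :=
        fun i => hx _ (heM i)
      choose rr hrr using hco
      have hxeq : x = ∑ i : bs, rr i • f i := by
        apply hΦinj
        apply e.ext
        intro i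
        rw [map_sum]
        have e2 : ∀ j : bs, Φ (rr j • f j) = rr j • Φ (f j) :=
          fun j => LinearMap.map_smul_of_tower Φ (rr j) (f j)
        simp only [e2, hf]
        rw [LinearMap.sum_apply]
        have e3 : ∀ j : bs, (rr j • e.coord j) (e i) =
            if j = i then algebraMap R K (rr j) else 0 := by
          intro j
          rw [LinearMap.smul_apply, Module.Basis.coord_apply, Module.Basis.repr_self]
          rw [Finsupp.single_apply]
          rcases eq_or_ne j i with h | h
          · simp [h, Algebra.smul_def]
          · simp [h, Ne.symm h]
        simp only [e3]
        rw [Finset.sum_ite_eq' Finset.univ i (fun j => algebraMap R K (rr j))]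
        simp only [Finset.mem_univ, if_true]
        rw [hΦapp]
        exact (hrr i).symm
      rw [hxeq]
      exact Submodule.sum_mem _ fun i _ =>
        Submodule.smul_mem _ _ (Submodule.subset_span (Set.mem_range_self i))
    exact Statement11Aux.fg_of_le (fun x hx => key x hx)
      (Submodule.fg_span (Set.finite_range f))
  have hsharp_span : Submodule.span K ((Msharp : Submodule R V) : Set V) = ⊤ := by
    apply top_unique
    rw [← hspan]
    exact Submodule.span_mono part1
  -- every vector can be scaled into M
  have hexp : ∀ y : V, ∃ t : ℕ, π ^ t • y ∈ M := by
    intro y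
    have hy : y ∈ Submodule.span K (M : Set V) := by rw [hspan]; trivial
    obtain ⟨n, cf, g, hsum⟩ := Submodule.mem_span_set'.mp hy
    have hcl : ∀ i : Fin n, ∃ (t : ℕ) (r : R),
        algebraMap R K r = algebraMap R K (π ^ t) * cf i := fun i => hclear (cf i)
    choose T rr hrr using hcl
    refine ⟨Finset.univ.sup T, ?_⟩
    rw [← hsum, Finset.smul_sum]
    apply Submodule.sum_mem
    intro i _
    obtain ⟨k, hk⟩ := Nat.exists_eq_add_of_le
      (Finset.le_sup (Finset.mem_univ i) : T i ≤ Finset.univ.sup T)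
    rw [hk]
    have h1 : (π ^ (T i + k) : R) • cf i = algebraMap R K (π ^ k * rr i) := by
      rw [Algebra.smul_def, pow_add, map_mul, map_mul, hrr i]
      ring
    rw [← smul_assoc, h1, algebraMap_smul]
    exact M.smul_mem _ (g i).2
  -- some power of π maps the dual lattice into M
  have hSt : ∃ t : ℕ, ∀ x ∈ Msharp, π ^ t • x ∈ M := by
    have hsfg2 := hsharp_fg
    obtain ⟨sS, hsS⟩ := hsfg2
    choose T hT using hexp
    refine ⟨sS.sup T, ?_⟩
    have hle : Msharp ≤ Submodule.comap
        ((π ^ (sS.sup T)) • (LinearMap.id : V →ₗ[R] V)) M := by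
      conv_lhs => rw [← hsS]
      apply Submodule.span_le.mpr
      intro y hy
      simp only [Set.mem_setOf_eq, SetLike.mem_coe, Submodule.mem_comap,
        LinearMap.smul_apply, LinearMap.id_apply]
      obtain ⟨k, hk⟩ := Nat.exists_eq_add_of_le (Finset.le_sup hy : T y ≤ sS.sup T)
      rw [hk, pow_add, mul_comm, mul_smul]
      exact M.smul_mem _ (hT y)
    intro x hx
    have := hle hx
    simpa only [Submodule.mem_comap, LinearMap.smul_apply, LinearMap.id_apply] using this
  -- the descent step : if π^(t+2) M^# ⊆ M then π^(t+1) M^# ⊆ M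
  have step2 : ∀ t : ℕ, (∀ x ∈ Msharp, π ^ (t + 2) • x ∈ M) →
      ∀ x ∈ Msharp, π ^ (t + 1) • x ∈ M := by
    intro t ht
    set ℓ : V →ₗ[R] V := (π ^ (t + 1)) • (LinearMap.id : V →ₗ[R] V) with hℓ
    have hℓapp : ∀ v : V, ℓ v = π ^ (t + 1) • v := fun v => rfl
    set L : Submodule R V := Submodule.map ℓ Msharp ⊔ M with hL
    have hLfg : L.FG := Submodule.FG.sup (hsharp_fg.map ℓ) hfg
    have hML : M ≤ L := le_sup_right
    have hLspan : Submodule.span K (L : Set V) = ⊤ := by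
      apply top_unique
      rw [← hspan]
      exact Submodule.span_mono hML
    have hLmem : ∀ x : V, x ∈ L → ∃ u, u ∈ Msharp ∧ ∃ m ∈ M, π ^ (t + 1) • u + m = x := by
      intro x hx
      obtain ⟨a, ha, m, hm, rfl⟩ := Submodule.mem_sup.mp hx
      obtain ⟨u, hu, rfl⟩ := Submodule.mem_map.mp ha
      exact ⟨u, hu, m, hm, rfl⟩
    have hLmem' : ∀ u ∈ Msharp, ∀ m ∈ M, π ^ (t + 1) • u + m ∈ L := by
      intro u hu m hm
      exact Submodule.mem_sup.mpr ⟨π ^ (t + 1) • u, Submodule.mem_map.mpr ⟨u, hu, rfl⟩,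
        m, hm, rfl⟩
    have hLinv : ∀ g : G, ∀ x ∈ L, ρ g x ∈ L := by
      intro g x hx
      obtain ⟨u, hu, m, hm, rfl⟩ := hLmem x hx
      have e : ρ g (π ^ (t + 1) • u + m) = π ^ (t + 1) • (ρ g u) + ρ g m := by
        rw [map_add, hsm, hsm, _root_.map_smul]
      rw [e]
      exact hLmem' _ (part4 g u hu) _ (hMinv g m hm)
    have hLint : ∀ x ∈ L, ∀ y ∈ L, ∃ r : R, algebraMap R K r = polar (⇑Q) x y := by
      intro x hx y hy
      obtain ⟨u, hu, m, hm, rfl⟩ := hLmem x hx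
      obtain ⟨u', hu', m', hm', rfl⟩ := hLmem y hy
      rw [polar_add_left, polar_add_right, polar_add_right, hpsl, hpsl, hpsr, hpsr]
      have t1 : ∃ r : R, algebraMap R K r =
          algebraMap R K (π ^ (t + 1)) * (algebraMap R K (π ^ (t + 1)) * polar (⇑Q) u u') := by
        obtain ⟨r, hr⟩ := hu _ (ht u' hu')
        rw [hpsr] at hr
        refine ⟨π ^ t * r, ?_⟩
        have e4 : t + (t + 2) = t + 1 + (t + 1) := by omega
        rw [map_mul, hr, ← mul_assoc, ← mul_assoc, ← map_mul, ← map_mul, ← pow_add,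
          ← pow_add, e4]
      have t2 : ∃ r : R, algebraMap R K r =
          algebraMap R K (π ^ (t + 1)) * polar (⇑Q) u m' :=
        Statement11Aux.int_mulA _ (hu m' hm')
      have t3 : ∃ r : R, algebraMap R K r =
          algebraMap R K (π ^ (t + 1)) * polar (⇑Q) m u' := by
        have h5 : ∃ r : R, algebraMap R K r = polar (⇑Q) u' m := hu' m hm
        obtain ⟨r, hr⟩ := Statement11Aux.int_mulA (π ^ (t + 1)) h5
        exact ⟨r, by rw [hr, polar_comm]⟩
      obtain ⟨r1, h1⟩ := t1
      obtain ⟨r2, h2⟩ := t2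
      obtain ⟨r3, h3⟩ := t3
      obtain ⟨r4, h4⟩ := hMint m hm m' hm'
      refine ⟨r1 + r2 + r3 + r4, ?_⟩
      rw [map_add, map_add, map_add, h1, h2, h3, h4]
      ring
    have hLeven : ∀ x ∈ L, ∃ r : R, algebraMap R K r = Q x := by
      intro x hx
      have := lemA 1 L hLfg hLspan hLinv
        (fun a ha b hb => by rw [one_mul]; exact hLint a ha b hb) x hx
      obtain ⟨r, hr⟩ := this
      exact ⟨r, by rw [hr, one_mul]⟩
    have hLM : L = M := hmax L hLfg hLspan hLinv hLeven hML
    intro x hx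
    have : π ^ (t + 1) • x + 0 ∈ L := hLmem' x hx 0 M.zero_mem
    rw [add_zero, hLM] at this
    exact this
  -- part 2 : π · M^# ⊆ M
  have part2 : ∀ x ∈ dualLatticeSet Q M, π • x ∈ M := by
    obtain ⟨t, ht⟩ := hSt
    have base : ∀ x ∈ Msharp, π ^ (t + 1) • x ∈ M := by
      intro x hx
      rw [pow_succ, mul_comm, mul_smul]
      exact M.smul_mem _ (ht x hx)
    have down : ∀ k : ℕ, (∀ x ∈ Msharp, π ^ (k + 1) • x ∈ M) →
        ∀ x ∈ Msharp, π ^ 1 • x ∈ M := by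
      intro k
      induction k with
      | zero => exact id
      | succ n ih => exact fun h => ih (step2 n h)
    intro x hx
    have := down t base x hx
    rwa [pow_one] at this
  -- part 3 : π Q(M^#) ⊆ R
  have part3 : ∀ x ∈ dualLatticeSet Q M, ∃ r : R,
      algebraMap R K r = algebraMap R K π * Q x := by
    have hint : ∀ x ∈ Msharp, ∀ y ∈ Msharp, ∃ r : R,
        algebraMap R K r = algebraMap R K π * polar (⇑Q) x y := by
      intro x hx y hy
      have h1 := hx _ (part2 y hy)
      rwa [hpsr] at h1
    exact fun x hx => lemA (algebraMap R K π) Msharp hsharp_fg hsharp_span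
      (fun g x hx => part4 g x hx) hint x hx
  -- part 5 : q₁ is well-defined
  have part5 : ∀ x ∈ M, ∀ y ∈ M, (∃ z ∈ dualLatticeSet Q M, x - y = π • z) →
      ∃ r : R, algebraMap R K (π * r) = Q x - Q y := by
    rintro x hx y hy ⟨z, hz, hxy⟩
    have hx2 : x = y + π • z := by rw [← hxy]; abel
    obtain ⟨r1, hr1⟩ := part3 z hz
    obtain ⟨r2, hr2⟩ := hz y hy
    refine ⟨r1 + r2, ?_⟩
    have eQ : Q (π • z) = algebraMap R K π * algebraMap R K π * Q z := by
      rw [hsm, QuadraticMap.map_smul, smul_eq_mul]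
    have ep : polar (⇑Q) y (π • z) = algebraMap R K π * polar (⇑Q) z y := by
      rw [hpsr, polar_comm]
    have e : Q x - Q y = algebraMap R K π * (algebraMap R K π * Q z)
        + algebraMap R K π * polar (⇑Q) z y := by
      rw [hx2, hQadd, eQ, ep]
      ring
    rw [map_mul, map_add, e, ← hr1, ← hr2]
    ring
  -- part 6 : q₁ is nondegenerate
  have part6 : ∀ x ∈ M, (∀ y ∈ M, ∃ r : R, algebraMap R K (π * r) = polar (⇑Q) x y) →
      ∃ z ∈ dualLatticeSet Q M, x = π • z := by
    intro x _ hall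
    refine ⟨(algebraMap R K π)⁻¹ • x, ?_, ?_⟩
    · intro m hm
      obtain ⟨r, hr⟩ := hall m hm
      refine ⟨r, ?_⟩
      rw [polar_smul_left, smul_eq_mul, ← hr, map_mul]
      field_simp
    · rw [hsm, smul_smul, mul_inv_cancel₀ hp0, one_smul]
  -- part 7 : q₂ is well-defined
  have part7 : ∀ x ∈ dualLatticeSet Q M, ∀ y ∈ dualLatticeSet Q M, x - y ∈ M →
      ∃ r : R, algebraMap R K (π * r) =
        algebraMap R K π * Q x - algebraMap R K π * Q y := by
    intro x _ y hy hm
    obtain ⟨r1, hr1⟩ := heven _ hm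
    obtain ⟨r2, hr2⟩ := hy _ hm
    refine ⟨r1 + r2, ?_⟩
    have e : Q x = Q y + Q (x - y) + polar (⇑Q) y (x - y) := by
      have e2 : x = y + (x - y) := by abel
      conv_lhs => rw [e2]
      rw [hQadd]
    rw [map_mul, map_add, e, ← hr1, ← hr2]
    ring
  -- part 8 : q₂ is nondegenerate
  have part8 : ∀ x ∈ dualLatticeSet Q M,
      (∀ y ∈ dualLatticeSet Q M,
        ∃ r : R, algebraMap R K (π * r) = algebraMap R K π * polar (⇑Q) x y) →
      x ∈ M := by
    intro x hx hall
    have hall' : ∀ y ∈ Msharp, ∃ r : R, algebraMap R K r = polar (⇑Q) x y := by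
      intro y hy
      obtain ⟨r, hr⟩ := hall y hy
      refine ⟨r, mul_left_cancel₀ hp0 ?_⟩
      rw [← hr, map_mul]
    set O : Submodule R V := Submodule.span R (Set.range fun g : G => ρ g x) with hO
    have hOfin : (Set.range fun g : G => ρ g x).Finite := Set.finite_range _
    set N : Submodule R V := M ⊔ O with hN
    have hNfg : N.FG := Submodule.FG.sup hfg (Submodule.fg_span hOfin)
    have hMN : M ≤ N := le_sup_left
    have hNspan : Submodule.span K (N : Set V) = ⊤ := by
      apply top_unique
      rw [← hspan]
      exact Submodule.span_mono hMN
    have hOsharp : O ≤ Msharp := Submodule.span_le.mpr (by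
      rintro v ⟨g, rfl⟩
      exact part4 g x hx)
    have hNsharp : N ≤ Msharp := sup_le hMle hOsharp
    have hOinv : ∀ g : G, ∀ w ∈ O, ρ g w ∈ O := by
      intro g w hw
      have hmap : Submodule.map ((ρ g).restrictScalars R) O ≤ O := by
        rw [hO, Submodule.map_span]
        apply Submodule.span_le.mpr
        rintro v ⟨v', ⟨h, rfl⟩, rfl⟩
        refine Submodule.subset_span ⟨g * h, ?_⟩
        show ρ (g * h) x = (ρ g).restrictScalars R (ρ h x)
        rw [map_mul]
        rfl
      exact hmap (Submodule.mem_map_of_mem hw)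
    have hNinv : ∀ g : G, ∀ z ∈ N, ρ g z ∈ N := by
      intro g z hz
      obtain ⟨m, hm, w, hw, rfl⟩ := Submodule.mem_sup.mp hz
      rw [map_add]
      exact N.add_mem (hMN (hMinv g m hm)) ((le_sup_right : O ≤ N) (hOinv g w hw))
    have hNint : ∀ a ∈ N, ∀ b ∈ N, ∃ r : R, algebraMap R K r = polar (⇑Q) a b := by
      intro a ha b hb
      have haS : a ∈ Msharp := hNsharp ha
      let T : Submodule R V :=
        { carrier := {w : V | ∃ r : R, algebraMap R K r = polar (⇑Q) a w}
          add_mem' := by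
            intro u v hu hv
            show ∃ r : R, algebraMap R K r = polar (⇑Q) a (u + v)
            rw [polar_add_right]
            exact Statement11Aux.int_add hu hv
          zero_mem' := ⟨0, by rw [polar_zero_right, map_zero]⟩
          smul_mem' := by
            intro r u hu
            show ∃ s : R, algebraMap R K s = polar (⇑Q) a (r • u)
            rw [hpsr]
            exact Statement11Aux.int_mulA r hu }
      have hMT : ∀ m ∈ M, m ∈ T := fun m hm => haS m hm
      have hOT : O ≤ T := Submodule.span_le.mpr (by
        rintro v ⟨g, rfl⟩
        have e : polar (⇑Q) a (ρ g x) = polar (⇑Q) x (ρ g⁻¹ a) := by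
          rw [polar_comm, hpshift]
        show ∃ r : R, algebraMap R K r = polar (⇑Q) a (ρ g x)
        rw [e]
        exact hall' _ (part4 g⁻¹ a haS))
      have hNT : N ≤ T := sup_le (fun m hm => hMT m hm) hOT
      exact hNT hb
    have hNeven : ∀ z ∈ N, ∃ r : R, algebraMap R K r = Q z := by
      intro z hz
      obtain ⟨r, hr⟩ := lemA 1 N hNfg hNspan hNinv
        (fun a ha b hb => by rw [one_mul]; exact hNint a ha b hb) z hz
      exact ⟨r, by rw [hr, one_mul]⟩
    have hNM : N = M := hmax N hNfg hNspan hNinv hNeven hMN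
    have hxN : x ∈ N := (le_sup_right : O ≤ N) (Submodule.subset_span ⟨1, show ρ (1 : G) x = x by rw [map_one]; rfl⟩)
    rwa [hNM] at hxN
  exact ⟨part1, part2, part3, part4, part5, part6, part7, part8⟩
end

section
/- Let K be a number field with ring of integers O_K, and let S be a finite set of nonzero prime ideals of O_K. Then the set of square classes {δ·(K^×)² : δ ∈ K^×, and the ℘-adic valuation v_℘(δ) is even for every nonzero prime ideal ℘ of O_K not in S} is a finite subgroup of K^×/(K^×)². -/
open IsDedekindDomain IsDedekindDomain.HeightOneSpectrum FractionalIdeal nonZeroDivisors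

namespace Statement14Aux

variable {R : Type*} [CommRing R] [IsDedekindDomain R] {K : Type*} [Field K]
  [Algebra R K] [IsFractionRing R K]

lemma mod_eq_one_iff (v : HeightOneSpectrum R) (δ : Kˣ) :
    v.valuationOfNeZeroMod 2 (QuotientGroup.mk δ : Kˣ ⧸ (powMonoidHom 2 : Kˣ →* Kˣ).range) = 1 ↔
    ∃ n : ℤ, v.valuationOfNeZero δ = Multiplicative.ofAdd (2 * n) := by
  rw [valuationOfNeZeroMod]
  erw [MonoidHom.comp_apply]
  simp only [MulEquiv.coe_toMonoidHom, EmbeddingLike.map_eq_one_iff]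
  erw [QuotientGroup.map_mk, QuotientGroup.eq_one_iff]
  have hmem : v.valuationOfNeZero δ ∈ AddSubgroup.toSubgroup (AddSubgroup.zmultiples ((2:ℕ):ℤ)) ↔
      Multiplicative.toAdd (v.valuationOfNeZero δ) ∈ AddSubgroup.zmultiples ((2:ℕ):ℤ) := Iff.rfl
  rw [hmem, AddSubgroup.mem_zmultiples_iff]
  constructor
  · rintro ⟨k, hk⟩
    refine ⟨k, ?_⟩
    have : Multiplicative.toAdd (v.valuationOfNeZero δ) = 2 * k := by
      rw [← hk]; push_cast [zsmul_eq_mul]; ring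
    simpa using congrArg Multiplicative.ofAdd this
  · rintro ⟨n, hn⟩
    refine ⟨n, ?_⟩
    rw [hn]; push_cast [zsmul_eq_mul]; simp [mul_comm]

variable (K)

lemma count_spanSingleton (v : HeightOneSpectrum R) (δ : Kˣ) :
    FractionalIdeal.count K v (spanSingleton R⁰ (δ : K)) =
      - Multiplicative.toAdd (v.valuationOfNeZero δ) := by
  classical
  set s := IsLocalization.sec R⁰ (δ : K) with hs
  have hspec : (δ : K) * algebraMap R K (s.2 : R) = algebraMap R K s.1 :=
    IsLocalization.sec_spec R⁰ (δ : K)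
  have hs2 : algebraMap R K (s.2 : R) ≠ 0 :=
    IsFractionRing.to_map_ne_zero_of_mem_nonZeroDivisors s.2.2
  have hI : spanSingleton R⁰ (δ : K) =
      spanSingleton R⁰ ((algebraMap R K) (s.2 : R))⁻¹ * ↑(Ideal.span {s.1} : Ideal R) := by
    rw [coeIdeal_span_singleton, spanSingleton_mul_spanSingleton]
    congr 1
    field_simp [hs2]
    linear_combination hspec
  have h0 : spanSingleton R⁰ (δ : K) ≠ 0 := by
    rw [ne_eq, spanSingleton_eq_zero_iff]
    exact_mod_cast δ.ne_zero
  rw [count_well_defined K v h0 hI]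
  have : v.valuationOfNeZero δ = Multiplicative.ofAdd
      ((-(Associates.mk v.asIdeal).count (Associates.mk <| Ideal.span {s.1}).factors : ℤ) -
        (-(Associates.mk v.asIdeal).count (Associates.mk <| Ideal.span {(s.2 : R)}).factors : ℤ)) :=
    rfl
  rw [this]
  simp only [toAdd_ofAdd]
  ring

lemma exists_sqrt_ideal (δ : Kˣ)
    (h : ∀ v : HeightOneSpectrum R, ∃ n : ℤ,
      FractionalIdeal.count K v (spanSingleton R⁰ (δ : K)) = 2 * n) :
    ∃ D : (FractionalIdeal R⁰ K)ˣ, D ^ 2 = toPrincipalIdeal R K δ := by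
  classical
  set J : FractionalIdeal R⁰ K := spanSingleton R⁰ (δ : K) with hJ
  have hJ0 : J ≠ 0 := by
    rw [hJ, ne_eq, spanSingleton_eq_zero_iff]
    exact_mod_cast δ.ne_zero
  set exps : HeightOneSpectrum R → ℤ := fun v => Classical.choose (h v) with hexps
  have hcount : ∀ v, FractionalIdeal.count K v J = 2 * exps v := fun v =>
    Classical.choose_spec (h v)
  have hfin : ∀ᶠ v : HeightOneSpectrum R in Filter.cofinite, exps v = 0 := by
    filter_upwards [FractionalIdeal.finite_factors J] with v hv
    have := hcount v
    omega
  set D₀ : FractionalIdeal R⁰ K := ∏ᶠ v : HeightOneSpectrum R,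
    (v.asIdeal : FractionalIdeal R⁰ K) ^ exps v with hD₀
  have hsupp : (Function.mulSupport fun v : HeightOneSpectrum R =>
      (v.asIdeal : FractionalIdeal R⁰ K) ^ exps v).Finite := by
    apply Set.Finite.subset (Filter.eventually_cofinite.mp hfin)
    intro v hv
    simp only [Function.mem_mulSupport] at hv
    intro hv0
    exact hv (by rw [hv0, zpow_zero])
  have hsq : D₀ ^ 2 = J := by
    rw [hD₀, finprod_pow hsupp, ← FractionalIdeal.finprod_heightOneSpectrum_factorization' K hJ0]
    apply finprod_congr
    intro v
    rw [← zpow_natCast ((v.asIdeal : FractionalIdeal R⁰ K) ^ exps v) 2, ← zpow_mul]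
    congr 1
    have := hcount v
    push_cast
    linarith
  have hD0 : D₀ ≠ 0 := by
    intro h0
    rw [h0] at hsq
    exact hJ0 (by rw [← hsq]; ring)
  refine ⟨Units.mk0 D₀ hD0, ?_⟩
  apply Units.ext
  rw [Units.val_pow_eq_pow_val, Units.val_mk0, hsq, hJ, coe_toPrincipalIdeal]

variable {K}

lemma exists_unit_of_toPrincipalIdeal_eq_one (u : Kˣ)
    (h : toPrincipalIdeal R K u = 1) :
    ∃ w : Rˣ, Units.map (algebraMap R K : R →* K) w = u := by
  have h1 : spanSingleton R⁰ (u : K) = (1 : FractionalIdeal R⁰ K) := by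
    rw [← coe_toPrincipalIdeal, h, Units.val_one]
  have h2 : spanSingleton R⁰ ((u⁻¹ : Kˣ) : K) = (1 : FractionalIdeal R⁰ K) := by
    rw [← one_mul (spanSingleton R⁰ ((u⁻¹ : Kˣ) : K)), ← h1, spanSingleton_mul_spanSingleton,
      Units.mul_inv, spanSingleton_one, h1]
  have hm1 : (u : K) ∈ (1 : FractionalIdeal R⁰ K) := by
    rw [← h1]; exact mem_spanSingleton_self _ _
  have hm2 : ((u⁻¹ : Kˣ) : K) ∈ (1 : FractionalIdeal R⁰ K) := by
    rw [← h2]; exact mem_spanSingleton_self _ _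
  obtain ⟨a, ha⟩ := (FractionalIdeal.mem_one_iff _).mp hm1
  obtain ⟨b, hb⟩ := (FractionalIdeal.mem_one_iff _).mp hm2
  have hab : a * b = 1 := by
    apply IsFractionRing.injective R K
    rw [_root_.map_mul, _root_.map_one, ha, hb]
    simp
  have hba : b * a = 1 := by rw [mul_comm]; exact hab
  exact ⟨⟨a, b, hab, hba⟩, Units.ext (by simpa using ha)⟩

lemma comm_conj {G : Type*} [CommGroup G] (a b : G) : a⁻¹ * b * a * b⁻¹ = 1 := by
  rw [mul_assoc, mul_mul_mul_comm, inv_mul_cancel, mul_inv_cancel, one_mul]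

lemma finite_range_of_fg_of_sq {G H : Type*} [Group G] [Group.FG G] [CommGroup H]
    (f : G →* H) (h : ∀ z : H, z ^ 2 = 1) : Finite f.range := by
  have : Monoid.IsTorsion f.range := by
    intro g
    refine isOfFinOrder_iff_pow_eq_one.mpr ⟨2, by norm_num, ?_⟩
    ext
    push_cast
    exact h _
  exact CommGroup.finite_of_fg_torsion _ this

lemma sq_one (x : Kˣ ⧸ (powMonoidHom 2 : Kˣ →* Kˣ).range) : x ^ 2 = 1 := by
  induction x using QuotientGroup.induction_on with
  | H a =>
    rw [← QuotientGroup.mk'_apply, ← map_pow, QuotientGroup.mk'_apply, QuotientGroup.eq_one_iff]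
    exact ⟨a, rfl⟩

end Statement14Aux

open Statement14Aux NumberField

section Main

variable (K : Type*) [Field K] [NumberField K]

lemma selmer_empty_finite :
    Finite (selmerGroup (R := 𝓞 K) (K := K) (S := (∅ : Set (HeightOneSpectrum (𝓞 K)))) (n := 2)) := by
  classical
  set G2 := Kˣ ⧸ (powMonoidHom 2 : Kˣ →* Kˣ).range with hG2
  set T := selmerGroup (R := 𝓞 K) (K := K) (S := (∅ : Set (HeightOneSpectrum (𝓞 K)))) (n := 2)
    with hT
  set Cl := (FractionalIdeal (𝓞 K)⁰ K)ˣ ⧸ (toPrincipalIdeal (𝓞 K) K).range with hCl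
  haveI hClFin : Finite Cl := Finite.of_equiv _ (ClassGroup.equiv K).toEquiv
  haveI : Group.FG (𝓞 K)ˣ := Group.fg_iff_monoid_fg.mpr inferInstance
  set ψ : (𝓞 K)ˣ →* G2 :=
    (QuotientGroup.mk' (powMonoidHom 2 : Kˣ →* Kˣ).range).comp
      (Units.map (algebraMap (𝓞 K) K : (𝓞 K) →* K)) with hψ
  haveI hUfin : Finite ψ.range := finite_range_of_fg_of_sq (H := G2) ψ sq_one
  have hUset : (ψ.range : Set G2).Finite := Set.toFinite _
  -- the good predicate
  set good : G2 → Prop := fun x => ∃ p : Kˣ × (FractionalIdeal (𝓞 K)⁰ K)ˣ,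
    QuotientGroup.mk p.1 = x ∧ p.2 ^ 2 = toPrincipalIdeal (𝓞 K) K p.1 with hgooddef
  have hgood : ∀ x ∈ T, good x := by
    intro x hx
    obtain ⟨δ, rfl⟩ := QuotientGroup.mk_surjective x
    have heven : ∀ v : HeightOneSpectrum (𝓞 K), ∃ n : ℤ,
        FractionalIdeal.count K v (spanSingleton (𝓞 K)⁰ (δ : K)) = 2 * n := by
      intro v
      obtain ⟨n, hn⟩ := (mod_eq_one_iff v δ).mp (hx v (Set.notMem_empty v))
      refine ⟨-n, ?_⟩
      rw [count_spanSingleton K v δ, hn]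
      simp only [toAdd_ofAdd]
      ring
    obtain ⟨D, hD⟩ := exists_sqrt_ideal K δ heven
    exact ⟨(δ, D), rfl, hD⟩
  set cls : G2 → Cl := fun x =>
    if h : good x then QuotientGroup.mk (Classical.choose h).2 else 1 with hclsdef
  have key : ∀ x y : G2, ∀ hx : good x, ∀ hy : good y, cls x = cls y →
      ∃ u ∈ (ψ.range : Set G2), x = u * y := by
    intro x y hx hy hcls
    rw [hclsdef] at hcls
    simp only [dif_pos hx, dif_pos hy] at hcls
    obtain ⟨hx1, hx2⟩ := Classical.choose_spec hx
    obtain ⟨hy1, hy2⟩ := Classical.choose_spec hy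
    set px := Classical.choose hx
    set py := Classical.choose hy
    obtain ⟨c, hc⟩ := MonoidHom.mem_range.mp (QuotientGroup.eq.mp hcls)
    have hP : toPrincipalIdeal (𝓞 K) K (c ^ 2 * px.1 * py.1⁻¹) = 1 := by
      have hc2 : (toPrincipalIdeal (𝓞 K) K c) ^ 2 = (px.2)⁻¹ ^ 2 * py.2 ^ 2 := by
        rw [hc, mul_pow]
      rw [inv_pow, hx2] at hc2
      rw [hy2] at hc2
      rw [_root_.map_mul, _root_.map_mul, _root_.map_pow, hc2, _root_.map_inv]
      exact comm_conj _ _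
    obtain ⟨w, hw⟩ := exists_unit_of_toPrincipalIdeal_eq_one _ hP
    refine ⟨ψ w, ⟨w, rfl⟩, ?_⟩
    rw [← hx1, ← hy1]
    show QuotientGroup.mk px.1 =
      (QuotientGroup.mk (Units.map (algebraMap (𝓞 K) K : (𝓞 K) →* K) w : Kˣ) : G2) *
        QuotientGroup.mk py.1
    rw [← QuotientGroup.mk_mul]
    refine (QuotientGroup.eq).mpr ⟨c, ?_⟩
    rw [powMonoidHom_apply, hw, inv_mul_cancel_right, mul_comm (c ^ 2) px.1, ← mul_assoc,
      inv_mul_cancel, one_mul]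
  have hTfin : (T : Set G2).Finite := by
    have hsub : (T : Set G2) ⊆ ⋃ c : Cl, {x : G2 | good x ∧ cls x = c} := by
      intro x hx
      exact Set.mem_iUnion.mpr ⟨cls x, hgood x hx, rfl⟩
    refine Set.Finite.subset (Set.finite_iUnion fun c => ?_) hsub
    by_cases hc : {x : G2 | good x ∧ cls x = c}.Nonempty
    · obtain ⟨y, hgy, hcy⟩ := hc
      refine (hUset.image (fun u => u * y)).subset ?_
      rintro x ⟨hgx, hcx⟩
      obtain ⟨u, hu, hxy⟩ := key x y hgx hgy (hcx.trans hcy.symm)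
      exact ⟨u, hu, hxy.symm⟩
    · rw [Set.not_nonempty_iff_eq_empty] at hc
      rw [hc]
      exact Set.finite_empty
  exact hTfin.to_subtype

lemma selmer_finite (S : Set (HeightOneSpectrum (𝓞 K))) (hS : S.Finite) :
    Finite (selmerGroup (R := 𝓞 K) (K := K) (S := S) (n := 2)) := by
  classical
  haveI := selmer_empty_finite K
  haveI : Finite ↥S := hS.to_subtype
  set val := selmerGroup.valuation (R := 𝓞 K) (K := K) (S := S) (n := 2) with hval
  haveI hker : Finite val.ker := by
    rw [hval, selmerGroup.valuation_ker_eq]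
    exact Finite.of_injective
      (fun x => (⟨x.1.1, Subgroup.mem_subgroupOf.mp x.2⟩ :
        selmerGroup (R := 𝓞 K) (K := K) (S := (∅ : Set (HeightOneSpectrum (𝓞 K)))) (n := 2)))
      (by
        intro a b hab
        rw [Subtype.mk_eq_mk] at hab
        exact Subtype.ext (Subtype.ext hab))
  haveI hquot : Finite (selmerGroup (R := 𝓞 K) (K := K) (S := S) (n := 2) ⧸ val.ker) :=
    Finite.of_injective (QuotientGroup.kerLift val) (QuotientGroup.kerLift_injective val)
  exact Finite.of_equiv _ (Subgroup.groupEquivQuotientProdSubgroup (s := val.ker)).symm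

end Main

open IsDedekindDomain

/-- Let `K` be a number field with ring of integers `O_K` and `S` a
finite set of nonzero prime ideals of `O_K`.  The square classes `δ·(K^×)²` with
`v_℘(δ)` even for all primes `℘ ∉ S` form a finite subgroup of `K^×/(K^×)²`. -/
theorem statement14 (K : Type*) [Field K] [NumberField K]
    (S : Set (HeightOneSpectrum (NumberField.RingOfIntegers K))) (hS : S.Finite) :
    ∃ H : Subgroup (Kˣ ⧸ (powMonoidHom 2 : Kˣ →* Kˣ).range),
      (H : Set (Kˣ ⧸ (powMonoidHom 2 : Kˣ →* Kˣ).range)) =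
        {x | ∃ δ : Kˣ, QuotientGroup.mk δ = x ∧
          ∀ v : HeightOneSpectrum (NumberField.RingOfIntegers K), v ∉ S →
            ∃ n : ℤ, (v.valuation K (δ : K) : WithZero (Multiplicative ℤ)) =
              ((Multiplicative.ofAdd (2 * n) : Multiplicative ℤ) :
                WithZero (Multiplicative ℤ))} ∧
      Set.Finite (H : Set (Kˣ ⧸ (powMonoidHom 2 : Kˣ →* Kˣ).range)) := by
  classical
  refine ⟨selmerGroup (R := NumberField.RingOfIntegers K) (K := K) (S := S) (n := 2), ?_, ?_⟩
  · ext x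
    simp only [SetLike.mem_coe, Set.mem_setOf_eq]
    constructor
    · intro hx
      obtain ⟨δ, rfl⟩ := QuotientGroup.mk_surjective x
      refine ⟨δ, rfl, fun v hv => ?_⟩
      obtain ⟨n, hn⟩ := (mod_eq_one_iff v δ).mp (hx v hv)
      exact ⟨n, by rw [← v.valuationOfNeZero_eq, hn]⟩
    · rintro ⟨δ, rfl, hδ⟩
      intro v hv
      refine (mod_eq_one_iff v δ).mpr ?_
      obtain ⟨n, hn⟩ := hδ v hv
      exact ⟨n, WithZero.coe_inj.mp (by rw [v.valuationOfNeZero_eq, hn])⟩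
  · haveI := selmer_finite K S hS
    exact Set.toFinite _
end
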